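/- arXiv:1310.4365 — 7 statements merged into one kernel-verified Lean document; each statement's English description precedes it below -/
import Mathlib

section
/- Let α ∈ (0,1), let q : [0,∞) → ℝ be continuous and satisfy the Kamenev condition for some ε > 2 and t₀ > 0, and let x be a solution of the fractional differential equation (x^(α))'(t) + q(t)x(t) = 0 for t > 0. Then either x oscillates, or liminf_{t→+∞} x^(α)(t)·[x'(t) − x^(α)(t)] ≤ 0. -/
open Real MeasureTheory Filter

/-- The Caputo fractional derivative of order `α` of `h` at `t`:
`h^(α)(t) = (1/Γ(1−α)) ∫₀ᵗ h'(s) (t−s)^(−α) ds`. -/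
noncomputable def caputoDeriv (α : ℝ) (h : ℝ → ℝ) (t : ℝ) : ℝ :=
  (1 / Real.Gamma (1 - α)) * ∫ s in (0:ℝ)..t, deriv h s / (t - s) ^ α

/-- Kamenev condition: `limsup_{t→+∞} t^(−ε) ∫_{t₀}^t (t−s)^ε q(s) ds = +∞`. -/
def KamenevCondition (q : ℝ → ℝ) (ε t₀ : ℝ) : Prop :=
  ∀ M : ℝ, ∃ᶠ t in atTop, M < (1 / t ^ ε) * ∫ s in t₀..t, (t - s) ^ ε * q s

/-- `x` oscillates: there is an increasing unbounded sequence of positive points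
on which `x` takes alternately negative and positive values. -/
def Oscillates (x : ℝ → ℝ) : Prop :=
  ∃ t : ℕ → ℝ, StrictMono t ∧ Tendsto t atTop atTop ∧ (∀ n, 0 < t n) ∧
    ∀ n, x (t (2 * n)) < 0 ∧ 0 < x (t (2 * n + 1))

lemma caputoDeriv_neg (α : ℝ) (x : ℝ → ℝ) (t : ℝ) :
    caputoDeriv α (fun s => -x s) t = -caputoDeriv α x t := by
  unfold caputoDeriv
  have h : (fun s => deriv (fun u => -x u) s / (t - s) ^ α)
      = fun s => -(deriv x s / (t - s) ^ α) := by
    funext s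
    rw [deriv.fun_neg]
    ring
  rw [h, intervalIntegral.integral_neg]
  ring

lemma eventually_sign_of_not_oscillates {x : ℝ → ℝ}
    (h : ¬ Oscillates x) :
    (∀ᶠ t in atTop, 0 ≤ x t) ∨ (∀ᶠ t in atTop, x t ≤ 0) := by
  by_contra hc
  push_neg at hc
  obtain ⟨h1, h2⟩ := hc
  have h1 : ∃ᶠ t in atTop, ¬ (0 ≤ x t) := h1.mono (fun t ht => not_le.mpr ht)
  have h2 : ∃ᶠ t in atTop, ¬ (x t ≤ 0) := h2.mono (fun t ht => not_le.mpr ht)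
  have h1' : ∃ᶠ t in atTop, x t < 0 := h1.mono (fun t ht => not_le.mp ht)
  have h2' : ∃ᶠ t in atTop, 0 < x t := h2.mono (fun t ht => not_le.mp ht)
  have hneg : ∀ a : ℝ, ∃ b, a + 1 < b ∧ x b < 0 := by
    intro a
    obtain ⟨b, hb1, hb2⟩ := (h1'.and_eventually (eventually_gt_atTop (a+1))).exists
    exact ⟨b, hb2, hb1⟩
  have hpos : ∀ a : ℝ, ∃ b, a + 1 < b ∧ 0 < x b := by
    intro a
    obtain ⟨b, hb1, hb2⟩ := (h2'.and_eventually (eventually_gt_atTop (a+1))).exists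
    exact ⟨b, hb2, hb1⟩
  choose fn hfn1 hfn2 using hneg
  choose fp hfp1 hfp2 using hpos
  let g : ℕ → ℝ := fun n => Nat.rec (fn 0) (fun n a => if (n+1) % 2 = 0 then fn a else fp a) n
  have hg0 : g 0 = fn 0 := rfl
  have hgsucc : ∀ n, g (n+1) = if (n+1) % 2 = 0 then fn (g n) else fp (g n) := fun n => rfl
  have hstep : ∀ n, g n + 1 < g (n+1) := by
    intro n
    rw [hgsucc]
    split
    · exact hfn1 _
    · exact hfp1 _
  have hmono : StrictMono g := strictMono_nat_of_lt_succ (fun n => by have := hstep n; linarith)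
  have hge : ∀ n : ℕ, (n : ℝ) + 1 < g n := by
    intro n
    induction n with
    | zero => simpa [hg0] using hfn1 0
    | succ k ih =>
      have := hstep k
      push_cast
      linarith
  have hposn : ∀ n, 0 < g n := fun n => by
    have := hge n
    have : (0:ℝ) ≤ (n:ℝ) := Nat.cast_nonneg n
    linarith [hge n]
  have htend : Tendsto g atTop atTop := by
    apply tendsto_atTop_mono (fun n => (le_of_lt ?_)) tendsto_natCast_atTop_atTop
    have := hge n
    linarith
  refine h ⟨g, hmono, htend, hposn, fun n => ⟨?_, ?_⟩⟩
  · rcases n with _ | k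
    · simpa [hg0] using hfn2 0
    · have h2 : 2 * (k + 1) = (2 * k + 1) + 1 := by ring
      rw [h2, hgsucc]
      have : ((2 * k + 1) + 1) % 2 = 0 := by omega
      rw [if_pos this]
      exact hfn2 _
  · rw [hgsucc]
    have : (2 * n + 1) % 2 ≠ 0 := by omega
    rw [if_neg this]
    exact hfp2 _

private lemma quad_aux (e r y p0 p1 p2 : ℝ) (ha : 0 ≤ p0)
    (h1 : p1 = p0 * r) (h2 : p2 = p0 * r ^ 2) :
    -(e ^ 2 / 4 * p0) ≤ e * (p1 * y) + p2 * y ^ 2 := by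
  subst h1 h2
  nlinarith [mul_nonneg ha (sq_nonneg (r * y + e / 2))]

set_option maxHeartbeats 2000000 in
lemma kamenev_core {α ε t₀ : ℝ} (hε : 2 < ε) (ht₀ : 0 < t₀)
    {q x : ℝ → ℝ} (hq : ContinuousOn q (Set.Ici (0:ℝ)))
    (hK : KamenevCondition q ε t₀)
    (hx : ContDiffOn ℝ 1 x (Set.Ici (0:ℝ)))
    (heq : ∀ t > (0:ℝ), HasDerivAt (caputoDeriv α x) (-(q t * x t)) t)
    (hpos : ∀ᶠ t in atTop, 0 ≤ x t)
    (hG : ∀ᶠ t in atTop, 0 < caputoDeriv α x t * (deriv x t - caputoDeriv α x t)) :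
    False := by
  set G : ℝ → ℝ := caputoDeriv α x with hGdef
  clear_value G
  obtain ⟨T₀, hT₀⟩ := (hpos.and hG).exists_forall_of_atTop
  set T : ℝ := max (max T₀ t₀) 1 + 1 with hTdef
  have hTT₀ : T₀ < T := by
    have : T₀ ≤ max (max T₀ t₀) 1 := le_trans (le_max_left _ _) (le_max_left _ _)
    simp only [hTdef]; linarith
  have hTt₀ : t₀ < T := by
    have : t₀ ≤ max (max T₀ t₀) 1 := le_trans (le_max_right _ _) (le_max_left _ _)
    simp only [hTdef]; linarith
  have hT2 : (2:ℝ) ≤ T := by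
    have : (1:ℝ) ≤ max (max T₀ t₀) 1 := le_max_right _ _
    simp only [hTdef]; linarith
  have hT0 : (0:ℝ) < T := by linarith
  -- basic regularity facts
  have hxdiff : ∀ t : ℝ, 0 < t → HasDerivAt x (deriv x t) t := by
    intro t ht
    exact ((hx.differentiableOn one_ne_zero).differentiableAt (Ici_mem_nhds ht)).hasDerivAt
  have hdcont : ContinuousOn (deriv x) (Set.Ioi (0:ℝ)) :=
    (hx.mono Set.Ioi_subset_Ici_self).continuousOn_deriv_of_isOpen isOpen_Ioi le_rfl
  have hGcont : ContinuousOn G (Set.Ioi (0:ℝ)) := fun t ht =>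
    ((heq t ht).continuousAt).continuousWithinAt
  have hxcont : ContinuousOn x (Set.Ici (0:ℝ)) := hx.continuousOn
  -- strict positivity of x on [T, ∞)
  have hxpos : ∀ t : ℝ, T ≤ t → 0 < x t := by
    intro t ht
    have ht0 : (0:ℝ) < t := by linarith
    have htT₀ : T₀ ≤ t := by linarith
    rcases (hT₀ t htT₀).1.lt_or_eq with h | h
    · exact h
    · exfalso
      have hmin : IsLocalMin x t := by
        filter_upwards [Ioi_mem_nhds (show T₀ < t by linarith)] with s hs
        rw [← h]
        exact (hT₀ s (le_of_lt hs)).1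
      have hd0 : deriv x t = 0 := hmin.deriv_eq_zero
      have h2 := (hT₀ t htT₀).2
      rw [hd0] at h2
      nlinarith [sq_nonneg (G t)]
  -- Riccati function
  set w : ℝ → ℝ := fun s => G s / x s with hwdef
  set C : ℝ := ∫ s in t₀..T, |q s| with hCdef
  set M : ℝ := C + |w T| + ε^2/4 with hMdef
  clear_value C M
  -- continuity helper for powers
  have hup : ∀ p : ℝ, 0 ≤ p → ∀ t : ℝ, Continuous (fun s : ℝ => (t - s) ^ p) := by
    intro p hp t
    exact (continuous_const.sub continuous_id).rpow_const (fun s => Or.inr hp)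
  -- the main bound
  have hbound : ∀ t : ℝ, T ≤ t →
      (1 / t ^ ε) * ∫ s in t₀..t, (t - s) ^ ε * q s ≤ M := by
    intro t ht
    have ht0 : (0:ℝ) < t := by linarith
    have htpow : (0:ℝ) < t ^ ε := rpow_pos_of_pos ht0 ε
    -- interval inclusion facts
    have hIcc_sub : Set.Icc T t ⊆ Set.Ioi (0:ℝ) := fun s hs => by
      simp only [Set.mem_Ioi]; linarith [hs.1]
    -- continuity of all integrands on [T, t]
    have hqc : ContinuousOn q (Set.Icc T t) := hq.mono (fun s hs => Set.mem_Ici.mpr (by linarith [hs.1]))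
    have hGc : ContinuousOn G (Set.Icc T t) := hGcont.mono hIcc_sub
    have hxc : ContinuousOn x (Set.Icc T t) := hxcont.mono (fun s hs => Set.mem_Ici.mpr (by linarith [hs.1]))
    have hdc : ContinuousOn (deriv x) (Set.Icc T t) := hdcont.mono hIcc_sub
    have hxne : ∀ s ∈ Set.Icc T t, x s ≠ 0 := fun s hs => ne_of_gt (hxpos s hs.1)
    have hwc : ContinuousOn w (Set.Icc T t) := hGc.div hxc hxne
    -- derivative of w
    have hwderiv : ∀ s ∈ Set.Icc T t, HasDerivAt w
        ((-(q s * x s) * x s - G s * deriv x s) / (x s) ^ 2) s := by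
      intro s hs
      have hs0 : (0:ℝ) < s := by linarith [hs.1]
      exact (heq s hs0).div (hxdiff s hs0) (hxne s hs)
    -- derivative of u s := (t - s) ^ ε
    have huderiv : ∀ s : ℝ, HasDerivAt (fun s : ℝ => (t - s) ^ ε)
        (ε * (t - s) ^ (ε - 1) * (-1)) s := by
      intro s
      have h1 : HasDerivAt (fun s : ℝ => t - s) (-1) s := by
        simpa using (hasDerivAt_id s).const_sub t
      exact (Real.hasDerivAt_rpow_const (p := ε) (x := t - s) (Or.inr (by linarith))).comp s h1
    -- integration by parts
    have hu'int : IntervalIntegrable (fun s : ℝ => ε * (t - s) ^ (ε - 1) * (-1)) volume T t := by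
      apply Continuous.intervalIntegrable
      exact (continuous_const.mul (hup (ε - 1) (by linarith) t)).mul continuous_const
    have hdint : IntervalIntegrable
        (fun s : ℝ => (-(q s * x s) * x s - G s * deriv x s) / (x s) ^ 2) volume T t := by
      apply ContinuousOn.intervalIntegrable
      rw [Set.uIcc_of_le ht]
      exact (((hqc.mul hxc).neg.mul hxc).sub (hGc.mul hdc)).div (hxc.pow 2)
        (fun s hs => pow_ne_zero 2 (hxne s hs))
    have hibp := intervalIntegral.integral_mul_deriv_eq_deriv_mul
      (u := fun s : ℝ => (t - s) ^ ε) (u' := fun s : ℝ => ε * (t - s) ^ (ε - 1) * (-1))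
      (v := w) (v' := fun s : ℝ => (-(q s * x s) * x s - G s * deriv x s) / (x s) ^ 2)
      (fun s hs => huderiv s)
      (fun s hs => hwderiv s (by rwa [Set.uIcc_of_le ht] at hs))
      hu'int hdint
    -- (t - t) ^ ε = 0
    have hut : (t - t) ^ ε = 0 := by
      rw [sub_self]; exact Real.zero_rpow (by linarith)
    -- more integrability facts
    have hic1 : IntervalIntegrable (fun s : ℝ => (t - s) ^ ε * ((-(q s * x s) * x s - G s * deriv x s) / (x s) ^ 2)) volume T t := by
      apply ContinuousOn.intervalIntegrable
      rw [Set.uIcc_of_le ht]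
      exact ((hup ε (by linarith) t).continuousOn).mul ((((hqc.mul hxc).neg.mul hxc).sub (hGc.mul hdc)).div (hxc.pow 2) (fun s hs => pow_ne_zero 2 (hxne s hs)))
    have hic2 : IntervalIntegrable (fun s : ℝ => (t - s) ^ ε * (G s * deriv x s / (x s) ^ 2)) volume T t := by
      apply ContinuousOn.intervalIntegrable
      rw [Set.uIcc_of_le ht]
      exact ((hup ε (by linarith) t).continuousOn).mul (((hGc.mul hdc)).div (hxc.pow 2) (fun s hs => pow_ne_zero 2 (hxne s hs)))
    have hic3 : IntervalIntegrable (fun s : ℝ => (t - s) ^ (ε - 1) * w s) volume T t := by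
      apply ContinuousOn.intervalIntegrable
      rw [Set.uIcc_of_le ht]
      exact ((hup (ε-1) (by linarith) t).continuousOn).mul hwc
    have hic4 : IntervalIntegrable (fun s : ℝ => ε * ((t - s) ^ (ε - 1) * w s) + (t - s) ^ ε * (G s * deriv x s / (x s) ^ 2)) volume T t := (hic3.const_mul ε).add hic2
    have hic5 : IntervalIntegrable (fun s : ℝ => -((ε^2/4) * (t - s) ^ (ε - 2))) volume T t := by
      apply Continuous.intervalIntegrable
      exact (continuous_const.mul (hup (ε-2) (by linarith) t)).neg
    -- rewrite integration by parts
    have hstep : (t - t) ^ ε * w t - (t - T) ^ ε * w T - (∫ s in T..t, (ε * (t - s) ^ (ε - 1) * (-1)) * w s)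
        = -((t - T) ^ ε * w T) + ε * ∫ s in T..t, (t - s) ^ (ε - 1) * w s := by
      rw [hut]
      have c1 : (∫ s in T..t, (ε * (t - s) ^ (ε - 1) * (-1)) * w s)
          = ∫ s in T..t, -(ε * ((t - s) ^ (ε - 1) * w s)) :=
        intervalIntegral.integral_congr (fun s hs => by ring)
      rw [c1, intervalIntegral.integral_neg, intervalIntegral.integral_const_mul]
      ring
    have hE2 : ∫ s in T..t, (t - s) ^ ε * ((-(q s * x s) * x s - G s * deriv x s) / (x s) ^ 2)
        = -((t - T) ^ ε * w T) + ε * ∫ s in T..t, (t - s) ^ (ε - 1) * w s := hibp.trans hstep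
    -- expression of the q-integral via the Riccati substitution
    have hE1 : ∫ s in T..t, (t - s) ^ ε * q s
        = -(∫ s in T..t, (t - s) ^ ε * ((-(q s * x s) * x s - G s * deriv x s) / (x s) ^ 2))
          - ∫ s in T..t, (t - s) ^ ε * (G s * deriv x s / (x s) ^ 2) := by
      have hcg : ∫ s in T..t, (t - s) ^ ε * q s
          = ∫ s in T..t, (-((t - s) ^ ε * ((-(q s * x s) * x s - G s * deriv x s) / (x s) ^ 2))
              - (t - s) ^ ε * (G s * deriv x s / (x s) ^ 2)) := by
        apply intervalIntegral.integral_congr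
        intro s hs
        rw [Set.uIcc_of_le ht] at hs
        have hxs := hxne s hs
        field_simp
        ring
      have hic1n : IntervalIntegrable (fun s : ℝ => -((t - s) ^ ε * ((-(q s * x s) * x s - G s * deriv x s) / (x s) ^ 2))) volume T t := hic1.neg
      have h2 : ∫ s in T..t, (-((t - s) ^ ε * ((-(q s * x s) * x s - G s * deriv x s) / (x s) ^ 2))
              - (t - s) ^ ε * (G s * deriv x s / (x s) ^ 2))
          = (∫ s in T..t, -((t - s) ^ ε * ((-(q s * x s) * x s - G s * deriv x s) / (x s) ^ 2)))
            - ∫ s in T..t, (t - s) ^ ε * (G s * deriv x s / (x s) ^ 2) :=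
        intervalIntegral.integral_sub hic1n hic2
      have h1 : ∫ s in T..t, -((t - s) ^ ε * ((-(q s * x s) * x s - G s * deriv x s) / (x s) ^ 2))
          = -∫ s in T..t, (t - s) ^ ε * ((-(q s * x s) * x s - G s * deriv x s) / (x s) ^ 2) :=
        intervalIntegral.integral_neg
      rw [hcg, h2, h1]
    -- pointwise quadratic estimate
    have hquad : ∀ s ∈ Set.Icc T t, -((ε^2/4) * (t - s) ^ (ε - 2)) ≤ ε * ((t - s) ^ (ε - 1) * w s) + (t - s) ^ ε * (G s * deriv x s / (x s) ^ 2) := by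
      intro s hs
      have hs0 : (0:ℝ) < s := by linarith [hs.1]
      have hxs : 0 < x s := hxpos s hs.1
      have hGs := (hT₀ s (by linarith [hs.1])).2
      have hw2 : (w s)^2 ≤ G s * deriv x s / (x s)^2 := by
        have h1 : (G s)^2 ≤ G s * deriv x s := by nlinarith
        have h2 : (G s)^2 / (x s)^2 ≤ (G s * deriv x s) / (x s)^2 :=
          (div_le_div_iff_of_pos_right (by positivity : (0:ℝ) < (x s)^2)).mpr h1
        simp only [hwdef]
        rw [div_pow]
        exact h2
      have hrs : (0:ℝ) ≤ t - s := by linarith [hs.2]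
      rcases hrs.eq_or_lt with h | hr
      · rw [← h, Real.zero_rpow (by linarith : ε - 1 ≠ 0), Real.zero_rpow (by linarith : ε ≠ 0), Real.zero_rpow (by linarith : ε - 2 ≠ 0)]
        simp
      · have ha : 0 ≤ (t-s) ^ (ε-2) := Real.rpow_nonneg hrs _
        have he1 : (t-s) ^ (ε-1) = (t-s) ^ (ε-2) * (t-s) := by
          conv_lhs => rw [show ε - 1 = (ε-2) + 1 by ring]
          rw [Real.rpow_add hr, Real.rpow_one]
        have he2 : (t-s) ^ ε = (t-s) ^ (ε-2) * (t-s)^(2:ℕ) := by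
          conv_lhs => rw [show ε = (ε-2) + 2 by ring]
          rw [Real.rpow_add hr]
          congr 1
          rw [show ((2:ℝ)) = ((2:ℕ):ℝ) by norm_num, Real.rpow_natCast]
        have hfinal : -(ε^2/4 * (t-s) ^ (ε-2)) ≤ ε * ((t-s) ^ (ε-1) * w s) + (t-s) ^ ε * (w s)^2 :=
          quad_aux ε (t-s) (w s) _ _ _ ha he1 he2
        have hmul : (t-s) ^ ε * (w s)^2 ≤ (t-s) ^ ε * (G s * deriv x s/(x s)^2) :=
          mul_le_mul_of_nonneg_left hw2 (Real.rpow_nonneg hrs ε)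
        linarith
    have hmono1 : ∫ s in T..t, -((ε^2/4) * (t - s) ^ (ε - 2)) ≤ ∫ s in T..t, (ε * ((t - s) ^ (ε - 1) * w s) + (t - s) ^ ε * (G s * deriv x s / (x s) ^ 2)) :=
      intervalIntegral.integral_mono_on ht hic5 hic4 hquad
    -- the main estimate on [T, t]
    have hTle : ∫ s in T..t, (t - s) ^ ε * q s ≤ (t - T)^ε * w T + ∫ s in T..t, (ε^2/4) * (t - s)^(ε-2) := by
      have hsum : ∫ s in T..t, (ε * ((t - s) ^ (ε - 1) * w s) + (t - s) ^ ε * (G s * deriv x s / (x s) ^ 2))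
          = ε * (∫ s in T..t, (t - s) ^ (ε - 1) * w s) + ∫ s in T..t, (t - s) ^ ε * (G s * deriv x s / (x s) ^ 2) := by
        rw [intervalIntegral.integral_add (hic3.const_mul ε) hic2, intervalIntegral.integral_const_mul]
      have hneg : ∫ s in T..t, -((ε^2/4) * (t - s) ^ (ε - 2)) = -∫ s in T..t, (ε^2/4) * (t - s) ^ (ε - 2) := intervalIntegral.integral_neg
      rw [hE1, hE2]
      rw [hsum, hneg] at hmono1
      linarith
    -- bound the remainder integral
    have hJ : ∫ s in T..t, (ε^2/4) * (t - s)^(ε-2) ≤ ε^2/4 * t^(ε-1) := by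
      have h1 : ∫ s in T..t, (ε^2/4) * (t - s)^(ε-2) ≤ ∫ s in T..t, (ε^2/4) * t^(ε-2) :=
        intervalIntegral.integral_mono_on ht
          (Continuous.intervalIntegrable (continuous_const.mul (hup (ε-2) (by linarith) t)) T t)
          intervalIntegrable_const
          (fun s hs => mul_le_mul_of_nonneg_left
            (Real.rpow_le_rpow (by linarith [hs.2]) (by linarith [hs.1]) (by linarith))
            (by positivity))
      have h2 : ∫ s in T..t, (ε^2/4) * t^(ε-2) = (t - T) * (ε^2/4 * t^(ε-2)) := by
        rw [intervalIntegral.integral_const, smul_eq_mul]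
      have h3 : t^(ε-2) * t = t^(ε-1) := by
        rw [show ε - 1 = (ε-2) + 1 by ring, Real.rpow_add ht0, Real.rpow_one]
      have h4 : 0 ≤ t ^ (ε-2) := Real.rpow_nonneg (le_of_lt ht0) _
      have h5 : (t - T) * (ε^2/4 * t^(ε-2)) ≤ t * (ε^2/4 * t^(ε-2)) :=
        mul_le_mul_of_nonneg_right (by linarith) (mul_nonneg (by positivity) h4)
      have h6 : t * (ε^2/4 * t^(ε-2)) = ε^2/4 * t^(ε-1) := by rw [← h3]; ring
      linarith
    -- bound the initial segment
    have hqcT : ContinuousOn q (Set.Icc t₀ T) := hq.mono (fun s hs => Set.mem_Ici.mpr (by linarith [hs.1]))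
    have hfront : ∫ s in t₀..T, (t - s)^ε * q s ≤ t^ε * C := by
      have h1 : ∫ s in t₀..T, (t - s)^ε * q s ≤ ∫ s in t₀..T, t^ε * |q s| := by
        apply intervalIntegral.integral_mono_on (le_of_lt hTt₀)
        · exact ContinuousOn.intervalIntegrable (by rw [Set.uIcc_of_le (le_of_lt hTt₀)]; exact (hup ε (by linarith) t).continuousOn.mul hqcT)
        · exact ContinuousOn.intervalIntegrable (by rw [Set.uIcc_of_le (le_of_lt hTt₀)]; exact continuousOn_const.mul hqcT.abs)
        · intro s hs
          have hts : (0:ℝ) ≤ t - s := by linarith [hs.2]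
          have hp1 : (t - s)^ε ≤ t^ε := Real.rpow_le_rpow hts (by linarith [hs.1]) (by linarith)
          have hp0 : (0:ℝ) ≤ (t - s)^ε := Real.rpow_nonneg hts _
          calc (t - s)^ε * q s ≤ (t - s)^ε * |q s| := mul_le_mul_of_nonneg_left (le_abs_self _) hp0
            _ ≤ t^ε * |q s| := mul_le_mul_of_nonneg_right hp1 (abs_nonneg _)
      rw [intervalIntegral.integral_const_mul, ← hCdef] at h1
      exact h1
    -- splitting the Kamenev integral
    have hint1 : IntervalIntegrable (fun s => (t - s)^ε * q s) volume t₀ T :=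
      ContinuousOn.intervalIntegrable (by rw [Set.uIcc_of_le (le_of_lt hTt₀)]; exact (hup ε (by linarith) t).continuousOn.mul hqcT)
    have hint2 : IntervalIntegrable (fun s => (t - s)^ε * q s) volume T t :=
      ContinuousOn.intervalIntegrable (by rw [Set.uIcc_of_le ht]; exact (hup ε (by linarith) t).continuousOn.mul hqc)
    have hsplit : ∫ s in t₀..t, (t - s)^ε * q s = (∫ s in t₀..T, (t - s)^ε * q s) + ∫ s in T..t, (t - s)^ε * q s :=
      (intervalIntegral.integral_add_adjacent_intervals hint1 hint2).symm
    -- assembling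
    have hwTb : (t - T)^ε * w T ≤ t^ε * |w T| := by
      calc (t - T)^ε * w T ≤ (t - T)^ε * |w T| := mul_le_mul_of_nonneg_left (le_abs_self _) (Real.rpow_nonneg (by linarith) ε)
        _ ≤ t^ε * |w T| := mul_le_mul_of_nonneg_right (Real.rpow_le_rpow (by linarith) (by linarith) (by linarith)) (abs_nonneg _)
    have hee : t^(ε-1) ≤ t^ε := Real.rpow_le_rpow_of_exponent_le (by linarith) (by linarith)
    have htotal : ∫ s in t₀..t, (t - s)^ε * q s ≤ t^ε * M := by
      have hMexp : t^ε * M = t^ε * C + t^ε * |w T| + ε^2/4 * t^ε := by rw [hMdef]; ring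
      have h7 : ε^2/4 * t^(ε-1) ≤ ε^2/4 * t^ε :=
        mul_le_mul_of_nonneg_left hee (by positivity)
      rw [hsplit, hMexp]
      linarith
    calc (1 / t^ε) * ∫ s in t₀..t, (t - s)^ε * q s ≤ (1 / t^ε) * (t^ε * M) :=
          mul_le_mul_of_nonneg_left htotal (by positivity)
      _ = M := by field_simp
  -- conclude using the Kamenev condition
  obtain ⟨t, ht1, ht2⟩ := ((hK M).and_eventually (eventually_ge_atTop T)).exists
  exact absurd (hbound t ht2) (not_le.mpr ht1)


theorem kamenev_type_oscillation_liminf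
    (α ε t₀ : ℝ) (hα : α ∈ Set.Ioo (0:ℝ) 1) (hε : 2 < ε) (ht₀ : 0 < t₀)
    (q x : ℝ → ℝ) (hq : ContinuousOn q (Set.Ici (0:ℝ)))
    (hK : KamenevCondition q ε t₀)
    (hx : ContDiffOn ℝ 1 x (Set.Ici (0:ℝ)))
    (heq : ∀ t > (0:ℝ), HasDerivAt (caputoDeriv α x) (-(q t * x t)) t) :
    Oscillates x ∨
      Filter.liminf
        (fun t => ((caputoDeriv α x t * (deriv x t - caputoDeriv α x t) : ℝ) : EReal))
        Filter.atTop ≤ (0 : EReal) := by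
  by_cases hosc : Oscillates x
  · exact Or.inl hosc
  right
  by_contra hlim
  rw [not_le] at hlim
  have hfreq : ∀ᶠ t in atTop,
      (0:EReal) < ((caputoDeriv α x t * (deriv x t - caputoDeriv α x t) : ℝ) : EReal) :=
    Filter.eventually_lt_of_lt_liminf hlim
  have hG : ∀ᶠ t in atTop, 0 < caputoDeriv α x t * (deriv x t - caputoDeriv α x t) :=
    hfreq.mono (fun t ht => by exact_mod_cast ht)
  rcases eventually_sign_of_not_oscillates hosc with hpos | hneg
  · exact kamenev_core hε ht₀ hq hK hx heq hpos hG
  · -- apply the core lemma to `-x`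
    have hfun : caputoDeriv α (fun s => -x s) = fun t => -(caputoDeriv α x t) :=
      funext (caputoDeriv_neg α x)
    have heq' : ∀ t > (0:ℝ), HasDerivAt (caputoDeriv α (fun s => -x s)) (-(q t * (-(x t)))) t := by
      intro t ht
      rw [hfun]
      have := (heq t ht).fun_neg
      rw [show -(q t * -x t) = -(-(q t * x t)) by ring]
      exact this
    have hx' : ContDiffOn ℝ 1 (fun s => -x s) (Set.Ici (0:ℝ)) := hx.neg
    have hpos' : ∀ᶠ t in atTop, 0 ≤ -x t := hneg.mono (fun t ht => neg_nonneg.mpr ht)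
    have hG' : ∀ᶠ t in atTop,
        0 < caputoDeriv α (fun s => -x s) t *
          (deriv (fun s => -x s) t - caputoDeriv α (fun s => -x s) t) := by
      filter_upwards [hG] with t ht
      rw [hfun, deriv.fun_neg]
      have heval : -(caputoDeriv α x t) * (-deriv x t - -(caputoDeriv α x t))
          = caputoDeriv α x t * (deriv x t - caputoDeriv α x t) := by ring
      rw [heval]
      exact ht
    exact kamenev_core hε ht₀ hq hK hx' heq' hpos' hG'
end

section
/- Let α ∈ (0,1), let q : [0,∞) → ℝ be continuous, and let x be a solution of the fractional differential equation (x^(α))'(t) + q(t)x(t) = 0 for t > 0 such that x(t) > 0 for all t ≥ T (for some T > 0) and x^(α)(t)·[x'(t) − x^(α)(t)] ≥ 0 for all t ≥ T. Then the function w defined by w(t) = x^(α)(t)/x(t) satisfies the Riccati differential inequality w'(t) + [w(t)]² + q(t) ≤ 0 for every t ≥ T. -/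
open Real MeasureTheory Filter

theorem riccati_inequality_for_nonoscillatory_solution
    (α T : ℝ) (hα : α ∈ Set.Ioo (0:ℝ) 1) (hT : 0 < T)
    (q x : ℝ → ℝ) (hq : ContinuousOn q (Set.Ici (0:ℝ)))
    (hx : ContDiffOn ℝ 1 x (Set.Ici (0:ℝ)))
    (heq : ∀ t > (0:ℝ), HasDerivAt (caputoDeriv α x) (-(q t * x t)) t)
    (hxpos : ∀ t ≥ T, 0 < x t)
    (hsign : ∀ t ≥ T, 0 ≤ caputoDeriv α x t * (deriv x t - caputoDeriv α x t)) :
    ∀ t ≥ T,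
      deriv (fun s => caputoDeriv α x s / x s) t
          + (caputoDeriv α x t / x t) ^ 2 + q t ≤ 0 := by
  intro t ht
  have ht0 : 0 < t := lt_of_lt_of_le hT ht
  have hxt : 0 < x t := hxpos t ht
  have hxd : HasDerivAt x (deriv x t) t := by
    have : DifferentiableAt ℝ x t := by
      have h1 : ContDiffAt ℝ 1 x t :=
        (hx t (le_of_lt ht0)).contDiffAt (Ici_mem_nhds ht0)
      exact h1.differentiableAt one_ne_zero
    exact this.hasDerivAt
  have hD : HasDerivAt (caputoDeriv α x) (-(q t * x t)) t := heq t ht0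
  have hdiv : HasDerivAt (fun s => caputoDeriv α x s / x s)
      ((-(q t * x t) * x t - caputoDeriv α x t * deriv x t) / (x t) ^ 2) t :=
    hD.div hxd hxt.ne'
  rw [hdiv.deriv]
  have hs := hsign t ht
  have hx2 : (0:ℝ) < (x t) ^ 2 := by positivity
  have h1 : (-(q t * x t) * x t - caputoDeriv α x t * deriv x t) / x t ^ 2
      + (caputoDeriv α x t / x t) ^ 2 + q t
      = -(caputoDeriv α x t * (deriv x t - caputoDeriv α x t)) / x t ^ 2 := by
    field_simp
    ring
  rw [h1]
  exact div_nonpos_of_nonpos_of_nonneg (by linarith) hx2.le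
end

section
/- Let q : [0,∞) → ℝ be continuous and satisfy the Kamenev condition for some ε > 2 and t₀ > 0. Then there is no T > 0 and differentiable function w : [T,∞) → ℝ satisfying the Riccati differential inequality w'(t) + [w(t)]² + q(t) ≤ 0 for all t ≥ T. -/
open Real MeasureTheory Filter

lemma riccati_integral_est (ε : ℝ) (hε : 2 < ε) (Q w : ℝ → ℝ) (hQ : Continuous Q)
    (T₁ t : ℝ) (ht : T₁ ≤ t)
    (hw : ∀ s ∈ Set.Icc T₁ t, DifferentiableAt ℝ w s)
    (hric : ∀ s ∈ Set.Icc T₁ t, deriv w s + (w s) ^ 2 + Q s ≤ 0) :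
    ∫ s in T₁..t, (t - s) ^ ε * Q s ≤
      (t - T₁) ^ ε * w T₁ + (ε ^ 2 / 4) * ∫ s in T₁..t, (t - s) ^ (ε - 2) := by
  have hεpos : (0:ℝ) < ε := by linarith
  -- φ : the continuous upper bound for g'
  set φ : ℝ → ℝ := fun s => ε ^ 2 / 4 * (t - s) ^ (ε - 2) - (t - s) ^ ε * Q s with hφdef
  have hcont_pow : ∀ p : ℝ, 0 ≤ p → Continuous (fun s : ℝ => (t - s) ^ p) := by
    intro p hp
    exact (Real.continuous_rpow_const hp).comp (continuous_const.sub continuous_id)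
  have hφcont : Continuous φ := by
    apply Continuous.sub
    · exact continuous_const.mul (hcont_pow (ε - 2) (by linarith))
    · exact (hcont_pow ε hεpos.le).mul hQ
  set P : ℝ → ℝ := fun u => ∫ x in T₁..u, φ x with hPdef
  have hP : ∀ s : ℝ, HasDerivAt P (φ s) s := by
    intro s
    exact intervalIntegral.integral_hasDerivAt_right
      (hφcont.intervalIntegrable _ _)
      (hφcont.stronglyMeasurableAtFilter _ _) hφcont.continuousAt
  set g : ℝ → ℝ := fun s => (t - s) ^ ε * w s with hgdef
  set G : ℝ → ℝ := fun s => P s - g s with hGdef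
  have hGcont : ContinuousOn G (Set.Icc T₁ t) := by
    apply ContinuousOn.sub
    · exact fun s _ => (hP s).continuousAt.continuousWithinAt
    · exact ((hcont_pow ε hεpos.le).continuousOn).mul
        (fun s hs => ((hw s hs).continuousAt).continuousWithinAt)
  -- derivative of g on the open interval
  have hg' : ∀ s ∈ Set.Ioo T₁ t, HasDerivAt g
      (-ε * (t - s) ^ (ε - 1) * w s + (t - s) ^ ε * deriv w s) s := by
    intro s hs
    have hts : (0:ℝ) < t - s := by linarith [hs.2]
    have h1 : HasDerivAt (fun s : ℝ => (t - s) ^ ε) (-(ε * (t - s) ^ (ε - 1))) s := by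
      have := (Real.hasDerivAt_rpow_const (x := t - s) (p := ε) (Or.inl hts.ne')).comp s
        ((hasDerivAt_id s).const_sub t)
      simpa [mul_comm, Function.comp_def] using this
    have h2 : HasDerivAt w (deriv w s) s := (hw s ⟨hs.1.le, hs.2.le⟩).hasDerivAt
    have := h1.mul h2
    exact this.congr_deriv (by ring)
  have hmono : MonotoneOn G (Set.Icc T₁ t) := by
    apply monotoneOn_of_deriv_nonneg (convex_Icc T₁ t) hGcont
    · rw [interior_Icc]
      intro s hs
      exact ((hP s).sub (hg' s hs)).differentiableAt.differentiableWithinAt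
    · rw [interior_Icc]
      intro s hs
      have hd : deriv G s = φ s - (-ε * (t - s) ^ (ε - 1) * w s + (t - s) ^ ε * deriv w s) :=
        ((hP s).sub (hg' s hs)).deriv
      rw [hd]
      have hts : (0:ℝ) < t - s := by linarith [hs.2]
      set a := t - s with hadef
      have hc : (0:ℝ) ≤ a ^ (ε - 2) := Real.rpow_nonneg hts.le _
      have ha1 : a ^ (ε - 1) = a ^ (ε - 2) * a := by
        conv_lhs => rw [show ε - 1 = ε - 2 + 1 by ring]
        rw [Real.rpow_add_one hts.ne']
      have ha0 : a ^ ε = a ^ (ε - 2) * a * a := by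
        conv_lhs => rw [show ε = ε - 2 + 1 + 1 by ring]
        rw [Real.rpow_add_one hts.ne', Real.rpow_add_one hts.ne']
      have hr : deriv w s ≤ -(w s) ^ 2 - Q s := by
        have := hric s ⟨hs.1.le, hs.2.le⟩; linarith
      have key : -ε * a ^ (ε - 1) * w s - a ^ ε * (w s) ^ 2 ≤ ε ^ 2 / 4 * a ^ (ε - 2) := by
        rw [ha1, ha0]
        nlinarith [mul_nonneg hc (sq_nonneg (a * w s + ε / 2))]
      have hanonneg : (0:ℝ) ≤ a ^ ε := Real.rpow_nonneg hts.le _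
      have : a ^ ε * deriv w s ≤ a ^ ε * (-(w s) ^ 2 - Q s) :=
        mul_le_mul_of_nonneg_left hr hanonneg
      simp only [hφdef]
      nlinarith
  have hGle := hmono (Set.left_mem_Icc.mpr ht) (Set.right_mem_Icc.mpr ht) ht
  have hGT : G T₁ = -((t - T₁) ^ ε * w T₁) := by
    simp [hGdef, hPdef, hgdef, intervalIntegral.integral_same]
  have hGt : G t = P t := by
    simp [hGdef, hgdef, Real.zero_rpow hεpos.ne']
  rw [hGT, hGt] at hGle
  have hPt : P t = (ε ^ 2 / 4) * (∫ s in T₁..t, (t - s) ^ (ε - 2)) -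
      ∫ s in T₁..t, (t - s) ^ ε * Q s := by
    simp only [hPdef, hφdef]
    rw [intervalIntegral.integral_sub, intervalIntegral.integral_const_mul]
    · exact (continuous_const.mul (hcont_pow (ε - 2) (by linarith))).intervalIntegrable _ _
    · exact ((hcont_pow ε hεpos.le).mul hQ).intervalIntegrable _ _
  rw [hPt] at hGle
  linarith

theorem no_global_riccati_solution_under_kamenev
    (ε t₀ : ℝ) (hε : 2 < ε) (ht₀ : 0 < t₀)
    (q : ℝ → ℝ) (hq : ContinuousOn q (Set.Ici (0:ℝ)))
    (hK : KamenevCondition q ε t₀) :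
    ¬ ∃ T : ℝ, 0 < T ∧ ∃ w : ℝ → ℝ,
        (∀ t ≥ T, DifferentiableAt ℝ w t) ∧
        ∀ t ≥ T, deriv w t + (w t) ^ 2 + q t ≤ 0 := by
  rintro ⟨T, hT, w, hw, hric⟩
  have hεpos : (0:ℝ) < ε := by linarith
  -- continuous extension of q
  set Q : ℝ → ℝ := fun s => q (max s 0) with hQdef
  have hQcont : Continuous Q :=
    hq.comp_continuous (continuous_id.max continuous_const) fun x => Set.mem_Ici.mpr (le_max_right _ _)
  have hQeq : ∀ s, 0 ≤ s → Q s = q s := fun s hs => by simp [hQdef, max_eq_left hs]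
  set T₁ : ℝ := max T t₀ with hT₁def
  have hT₁pos : 0 < T₁ := lt_of_lt_of_le ht₀ (le_max_right _ _)
  have hT₁T : T ≤ T₁ := le_max_left _ _
  have ht₀T₁ : t₀ ≤ T₁ := le_max_right _ _
  set C₁ : ℝ := ∫ s in t₀..T₁, |Q s| with hC₁def
  set M : ℝ := C₁ + |w T₁| + ε ^ 2 / 4 with hMdef
  -- pick a bad t
  obtain ⟨t, hKt, htlarge⟩ := ((hK M).and_eventually (eventually_ge_atTop (max T₁ 1))).exists
  have htT₁ : T₁ ≤ t := le_trans (le_max_left _ _) htlarge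
  have ht1 : (1:ℝ) ≤ t := le_trans (le_max_right _ _) htlarge
  have htpos : (0:ℝ) < t := lt_of_lt_of_le one_pos ht1
  have ht₀t : t₀ ≤ t := le_trans ht₀T₁ htT₁
  have hcont_pow : ∀ p : ℝ, 0 ≤ p → Continuous (fun s : ℝ => (t - s) ^ p) := fun p hp =>
    (Real.continuous_rpow_const hp).comp (continuous_const.sub continuous_id)
  have hint : ∀ a b : ℝ, IntervalIntegrable (fun s => (t - s) ^ ε * Q s) volume a b :=
    fun a b => ((hcont_pow ε hεpos.le).mul hQcont).intervalIntegrable _ _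
  -- rewrite Kamenev integral in terms of Q
  have hqQ : (∫ s in t₀..t, (t - s) ^ ε * q s) = ∫ s in t₀..t, (t - s) ^ ε * Q s := by
    apply intervalIntegral.integral_congr
    intro s hs
    rw [Set.uIcc_of_le ht₀t] at hs
    show (t - s) ^ ε * q s = (t - s) ^ ε * Q s
    rw [hQeq s (le_trans ht₀.le hs.1)]
  -- split the integral
  have hsplit : (∫ s in t₀..t, (t - s) ^ ε * Q s) =
      (∫ s in t₀..T₁, (t - s) ^ ε * Q s) + ∫ s in T₁..t, (t - s) ^ ε * Q s :=
    (intervalIntegral.integral_add_adjacent_intervals (hint _ _) (hint _ _)).symm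
  -- bound part 1
  have hpow_le : ∀ s : ℝ, t₀ ≤ s → s ≤ t → (t - s) ^ ε ≤ t ^ ε := fun s h1 h2 =>
    Real.rpow_le_rpow (by linarith) (by linarith) hεpos.le
  have hpart1 : (∫ s in t₀..T₁, (t - s) ^ ε * Q s) ≤ t ^ ε * C₁ := by
    rw [hC₁def, ← intervalIntegral.integral_const_mul]
    apply intervalIntegral.integral_mono_on ht₀T₁ (hint _ _)
      ((continuous_const.mul hQcont.abs).intervalIntegrable _ _)
    intro s hs
    have h1 : (t - s) ^ ε * Q s ≤ (t - s) ^ ε * |Q s| :=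
      mul_le_mul_of_nonneg_left (le_abs_self _) (Real.rpow_nonneg (by linarith [hs.2]) _)
    have h2 : (t - s) ^ ε * |Q s| ≤ t ^ ε * |Q s| :=
      mul_le_mul_of_nonneg_right (hpow_le s hs.1 (le_trans hs.2 htT₁)) (abs_nonneg _)
    exact h1.trans h2
  -- bound part 2 via the Riccati estimate
  have hQric : ∀ s ∈ Set.Icc T₁ t, deriv w s + (w s) ^ 2 + Q s ≤ 0 := by
    intro s hs
    rw [hQeq s (le_trans hT₁pos.le hs.1)]
    exact hric s (le_trans hT₁T hs.1)
  have hpart2 := riccati_integral_est ε hε Q w hQcont T₁ t htT₁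
    (fun s hs => hw s (le_trans hT₁T hs.1)) hQric
  -- bound the remainder integral
  have hrem : (∫ s in T₁..t, (t - s) ^ (ε - 2)) ≤ t ^ (ε - 1) := by
    have h1 : (∫ s in T₁..t, (t - s) ^ (ε - 2)) ≤ ∫ s in T₁..t, t ^ (ε - 2) := by
      apply intervalIntegral.integral_mono_on htT₁
        ((hcont_pow (ε - 2) (by linarith)).intervalIntegrable _ _)
        (intervalIntegrable_const)
      intro s hs
      exact Real.rpow_le_rpow (by linarith [hs.2]) (by linarith [hs.1, hT₁pos]) (by linarith)
    rw [intervalIntegral.integral_const, smul_eq_mul] at h1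
    have h2 : (t - T₁) * t ^ (ε - 2) ≤ t * t ^ (ε - 2) :=
      mul_le_mul_of_nonneg_right (by linarith) (Real.rpow_nonneg htpos.le _)
    have h3 : t * t ^ (ε - 2) = t ^ (ε - 1) := by
      rw [show ε - 1 = ε - 2 + 1 by ring, Real.rpow_add_one htpos.ne']; ring
    linarith
  -- combine
  have hwT : (t - T₁) ^ ε * w T₁ ≤ t ^ ε * |w T₁| := by
    rcases le_or_gt 0 (w T₁) with h | h
    · calc (t - T₁) ^ ε * w T₁ ≤ t ^ ε * w T₁ :=
            mul_le_mul_of_nonneg_right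
              (Real.rpow_le_rpow (by linarith) (by linarith [hT₁pos]) hεpos.le) h
        _ ≤ t ^ ε * |w T₁| :=
            mul_le_mul_of_nonneg_left (le_abs_self _) (Real.rpow_nonneg htpos.le _)
    · have : (t - T₁) ^ ε * w T₁ ≤ 0 :=
        mul_nonpos_of_nonneg_of_nonpos (Real.rpow_nonneg (by linarith) _) h.le
      exact le_trans this (mul_nonneg (Real.rpow_nonneg htpos.le _) (abs_nonneg _))
  have htε : (0:ℝ) < t ^ ε := Real.rpow_pos_of_pos htpos _
  have htε1 : t ^ (ε - 1) ≤ t ^ ε :=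
    Real.rpow_le_rpow_of_exponent_le ht1 (by linarith)
  have hε24 : (0:ℝ) ≤ ε ^ 2 / 4 := by positivity
  have htotal : (∫ s in t₀..t, (t - s) ^ ε * Q s) ≤ t ^ ε * M := by
    rw [hsplit, hMdef]
    have : ε ^ 2 / 4 * (∫ s in T₁..t, (t - s) ^ (ε - 2)) ≤ ε ^ 2 / 4 * t ^ ε :=
      le_trans (mul_le_mul_of_nonneg_left hrem hε24) (mul_le_mul_of_nonneg_left htε1 hε24)
    nlinarith
  have hfinal : (1 / t ^ ε) * (∫ s in t₀..t, (t - s) ^ ε * q s) ≤ M := by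
    rw [hqQ]
    rw [div_mul_eq_mul_div, one_mul, div_le_iff₀ htε]
    linarith [htotal]
  linarith [hKt, hfinal]
end

section
/- Let ε > 2, T > 0, let q : [0,∞) → ℝ be continuous, and let w : [T,∞) → ℝ be differentiable with w'(t) + [w(t)]² + q(t) ≤ 0 for all t ≥ T. Then for every t ≥ T, ∫_T^t (t−s)^ε q(s) ds ≤ |w(T)|·(t−T)^ε + (ε²/(4(ε−1)))·(t−T)^{ε−1}; in particular, t^{−ε} ∫_T^t (t−s)^ε q(s) ds ≤ |w(T)| + ε²/(4(ε−1)t) for all t ≥ T. -/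
open Real MeasureTheory Filter

private lemma riccati_key
    (ε T : ℝ) (hε : 2 < ε) (hT : 0 < T)
    (q w : ℝ → ℝ) (hq : ContinuousOn q (Set.Ici (0:ℝ)))
    (hw : ∀ t ≥ T, DifferentiableAt ℝ w t)
    (hRic : ∀ t ≥ T, deriv w t + (w t) ^ 2 + q t ≤ 0)
    (t : ℝ) (hTt : T < t) :
    (∫ s in T..t, (t - s) ^ ε * q s) ≤
      |w T| * (t - T) ^ ε + ε ^ 2 / (4 * (ε - 1)) * (t - T) ^ (ε - 1) := by
  have hε0 : (0:ℝ) < ε := by linarith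
  have hε1 : (1:ℝ) ≤ ε := by linarith
  set c : ℝ := ε ^ 2 / (4 * (ε - 1)) with hcdef
  have hc0 : (0:ℝ) ≤ c := by
    have h1 : (0:ℝ) < ε - 1 := by linarith
    rw [hcdef]; positivity
  have crp : ∀ p : ℝ, 0 ≤ p → Continuous fun r : ℝ => (t - r) ^ p := fun p hp =>
    continuous_iff_continuousAt.2 fun r =>
      (Real.continuousAt_rpow_const (t - r) p (Or.inr hp)).comp
        ((continuous_const.sub continuous_id).continuousAt)
  have hwC : ∀ s, T ≤ s → ContinuousAt w s := fun s hs => (hw s hs).continuousAt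
  have cwI : ContinuousOn w (Set.Ici T) := fun s hs => (hwC s hs).continuousWithinAt
  set f1 : ℝ → ℝ := fun r => (t - r) ^ ε * q r with hf1def
  set g : ℝ → ℝ := fun r => ((t - r) ^ (ε/2) * w r + (ε/2) * (t - r) ^ (ε/2 - 1)) ^ 2 with hgdef
  have cf1 : ContinuousOn f1 (Set.Ioi 0) := fun s hs =>
    (((crp ε hε0.le).continuousAt).mul (hq.continuousAt (Ici_mem_nhds hs))).continuousWithinAt
  have cg : ContinuousOn g (Set.Ici T) :=
    (((crp (ε/2) (by linarith)).continuousOn.mul cwI).add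
      (continuousOn_const.mul (crp (ε/2 - 1) (by linarith)).continuousOn)).pow 2
  have hIccIoi : Set.Icc T t ⊆ Set.Ioi (0:ℝ) := fun r hr => lt_of_lt_of_le hT hr.1
  have huIcc : Set.uIcc T t = Set.Icc T t := Set.uIcc_of_le hTt.le
  have hint1 : IntervalIntegrable f1 volume T t :=
    (cf1.mono (by rw [huIcc]; exact hIccIoi)).intervalIntegrable
  have hint2 : IntervalIntegrable g volume T t :=
    (cg.mono (by rw [huIcc]; exact fun r hr => hr.1)).intervalIntegrable
  set H : ℝ → ℝ := fun s =>
    (∫ r in T..s, f1 r) + (t - s) ^ ε * w s + (∫ r in T..s, g r) + c * (t - s) ^ (ε - 1)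
    with hHdef
  have cH : ContinuousOn H (Set.Icc T t) := by
    refine ContinuousOn.add (ContinuousOn.add (ContinuousOn.add ?_ ?_) ?_) ?_
    · exact (intervalIntegral.continuousOn_primitive_interval' hint1 Set.left_mem_uIcc).mono
        (by rw [huIcc])
    · exact (crp ε hε0.le).continuousOn.mul (cwI.mono (fun r hr => hr.1))
    · exact (intervalIntegral.continuousOn_primitive_interval' hint2 Set.left_mem_uIcc).mono
        (by rw [huIcc])
    · exact continuousOn_const.mul (crp (ε - 1) (by linarith)).continuousOn
  have hderiv : ∀ s ∈ Set.Ioo T t,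
      HasDerivAt H ((t - s) ^ ε * (q s + deriv w s + (w s) ^ 2)) s := by
    intro s hs
    have hs0 : (0:ℝ) < s := hT.trans hs.1
    have hsT : T ≤ s := hs.1.le
    have hx : 0 < t - s := by linarith [hs.2]
    have hsub : Set.uIcc T s ⊆ Set.uIcc T t := by
      rw [huIcc, Set.uIcc_of_le hsT]; exact Set.Icc_subset_Icc le_rfl hs.2.le
    have d1 : HasDerivAt (fun u => ∫ r in T..u, f1 r) (f1 s) s :=
      intervalIntegral.integral_hasDerivAt_right (hint1.mono_set hsub)
        (cf1.stronglyMeasurableAtFilter isOpen_Ioi s hs0)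
        (cf1.continuousAt (Ioi_mem_nhds hs0))
    have cgO : ContinuousOn g (Set.Ioi T) := cg.mono Set.Ioi_subset_Ici_self
    have d3 : HasDerivAt (fun u => ∫ r in T..u, g r) (g s) s :=
      intervalIntegral.integral_hasDerivAt_right (hint2.mono_set hsub)
        (cgO.stronglyMeasurableAtFilter isOpen_Ioi s hs.1)
        (cgO.continuousAt (Ioi_mem_nhds hs.1))
    have drp : ∀ p : ℝ, 1 ≤ p →
        HasDerivAt (fun u : ℝ => (t - u) ^ p) (-(p * (t - s) ^ (p - 1))) s := by
      intro p hp
      have hinner : HasDerivAt (fun u : ℝ => t - u) (-1) s := (hasDerivAt_id s).const_sub t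
      have := (Real.hasDerivAt_rpow_const (x := t - s) (p := p) (Or.inr hp)).comp s hinner
      rw [show (-(p * (t - s) ^ (p - 1))) = (p * (t - s) ^ (p - 1)) * (-1) by ring]; exact this
    have d2 : HasDerivAt (fun u => (t - u) ^ ε * w u)
        (-(ε * (t - s) ^ (ε - 1)) * w s + (t - s) ^ ε * deriv w s) s :=
      (drp ε hε1).mul (hw s hsT).hasDerivAt
    have d4 : HasDerivAt (fun u => c * (t - u) ^ (ε - 1))
        (c * -((ε - 1) * (t - s) ^ (ε - 1 - 1))) s :=
      ((drp (ε - 1) (by linarith))).const_mul c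
    have hD := ((d1.add d2).add d3).add d4
    refine hD.congr_deriv ?_; symm
    have e1 : (t - s) ^ (ε/2) * (t - s) ^ (ε/2) = (t - s) ^ ε := by
      rw [← Real.rpow_add hx]; congr 1; ring
    have e2 : (t - s) ^ (ε/2) * (t - s) ^ (ε/2 - 1) = (t - s) ^ (ε - 1) := by
      rw [← Real.rpow_add hx]; congr 1; ring
    have e3 : (t - s) ^ (ε/2 - 1) * (t - s) ^ (ε/2 - 1) = (t - s) ^ (ε - 1 - 1) := by
      rw [← Real.rpow_add hx]; congr 1; ring
    have hc1 : c * (ε - 1) = ε ^ 2 / 4 := by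
      have h4 : (4:ℝ) * (ε - 1) ≠ 0 := by intro h; nlinarith
      rw [hcdef, div_mul_eq_mul_div, div_eq_div_iff h4 (by norm_num : (4:ℝ) ≠ 0)]
      ring
    have expand : g s = (t - s) ^ ε * w s ^ 2 + ε * (t - s) ^ (ε - 1) * w s
        + ε ^ 2 / 4 * (t - s) ^ (ε - 1 - 1) := by
      rw [hgdef]
      linear_combination (w s) ^ 2 * e1 + ε * w s * e2 + ε ^ 2 / 4 * e3
    rw [hf1def]
    linear_combination (-1 : ℝ) * expand + (t - s) ^ (ε - 1 - 1) * hc1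
  have hanti : AntitoneOn H (Set.Icc T t) := by
    apply antitoneOn_of_deriv_nonpos (convex_Icc T t) cH
    · intro s hs
      rw [interior_Icc] at hs
      exact (hderiv s hs).differentiableAt.differentiableWithinAt
    · intro s hs
      rw [interior_Icc] at hs
      rw [(hderiv s hs).deriv]
      have hx : (0:ℝ) ≤ t - s := by linarith [hs.2]
      have hr := hRic s hs.1.le
      have hxε : (0:ℝ) ≤ (t - s) ^ ε := Real.rpow_nonneg hx ε
      nlinarith
  have hHle : H t ≤ H T :=
    hanti (Set.left_mem_Icc.2 hTt.le) (Set.right_mem_Icc.2 hTt.le) hTt.le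
  have hεne : ε ≠ 0 := by linarith
  have hε1ne : ε - 1 ≠ 0 := by linarith
  have hHt : H t = (∫ r in T..t, f1 r) + (∫ r in T..t, g r) := by
    simp [hHdef, Real.zero_rpow hεne, Real.zero_rpow hε1ne]
  have hHT : H T = (t - T) ^ ε * w T + c * (t - T) ^ (ε - 1) := by
    simp [hHdef]
  have hgpos : 0 ≤ ∫ r in T..t, g r :=
    intervalIntegral.integral_nonneg hTt.le (fun u _ => by rw [hgdef]; positivity)
  have htT : (0:ℝ) ≤ (t - T) ^ ε := Real.rpow_nonneg (by linarith) _
  have habs : (t - T) ^ ε * w T ≤ |w T| * (t - T) ^ ε := by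
    rw [mul_comm]
    exact mul_le_mul_of_nonneg_right (le_abs_self _) htT
  rw [hHt, hHT] at hHle
  linarith

theorem riccati_kamenev_averaging_estimate
    (ε T : ℝ) (hε : 2 < ε) (hT : 0 < T)
    (q w : ℝ → ℝ) (hq : ContinuousOn q (Set.Ici (0:ℝ)))
    (hw : ∀ t ≥ T, DifferentiableAt ℝ w t)
    (hRic : ∀ t ≥ T, deriv w t + (w t) ^ 2 + q t ≤ 0) :
    (∀ t ≥ T,
      (∫ s in T..t, (t - s) ^ ε * q s) ≤
        |w T| * (t - T) ^ ε + ε ^ 2 / (4 * (ε - 1)) * (t - T) ^ (ε - 1)) ∧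
    ∀ t ≥ T,
      (1 / t ^ ε) * ∫ s in T..t, (t - s) ^ ε * q s ≤
        |w T| + ε ^ 2 / (4 * (ε - 1) * t) := by
  have hεne : ε ≠ 0 := by linarith
  have hε1ne : ε - 1 ≠ 0 := by linarith
  have hc0 : (0:ℝ) ≤ ε ^ 2 / (4 * (ε - 1)) := by
    have h1 : (0:ℝ) < ε - 1 := by linarith
    positivity
  have key : ∀ t ≥ T,
      (∫ s in T..t, (t - s) ^ ε * q s) ≤
        |w T| * (t - T) ^ ε + ε ^ 2 / (4 * (ε - 1)) * (t - T) ^ (ε - 1) := by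
    intro t ht
    rcases eq_or_lt_of_le ht with rfl | hTt
    · simp [Real.zero_rpow hεne, Real.zero_rpow hε1ne]
    · exact riccati_key ε T hε hT q w hq hw hRic t hTt
  refine ⟨key, fun t ht => ?_⟩
  have ht0 : 0 < t := lt_of_lt_of_le hT ht
  have htε : 0 < t ^ ε := Real.rpow_pos_of_pos ht0 ε
  have h2 : (t - T) ^ ε ≤ t ^ ε :=
    Real.rpow_le_rpow (by linarith) (by linarith) (by linarith)
  have h3 : (t - T) ^ (ε - 1) ≤ t ^ (ε - 1) :=
    Real.rpow_le_rpow (by linarith) (by linarith) (by linarith)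
  have h4 : t ^ (ε - 1) = t ^ ε / t := by
    rw [Real.rpow_sub ht0, Real.rpow_one]
  have hs1 : |w T| * (t - T) ^ ε ≤ |w T| * t ^ ε :=
    mul_le_mul_of_nonneg_left h2 (abs_nonneg _)
  have hs2 : ε ^ 2 / (4 * (ε - 1)) * (t - T) ^ (ε - 1)
      ≤ ε ^ 2 / (4 * (ε - 1)) * (t ^ ε / t) := by
    rw [← h4]; exact mul_le_mul_of_nonneg_left h3 hc0
  have htne : t ≠ 0 := ne_of_gt ht0
  have htεne : t ^ ε ≠ 0 := ne_of_gt htε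
  calc (1 / t ^ ε) * ∫ s in T..t, (t - s) ^ ε * q s
      ≤ (1 / t ^ ε) * (|w T| * (t - T) ^ ε + ε ^ 2 / (4 * (ε - 1)) * (t - T) ^ (ε - 1)) :=
        mul_le_mul_of_nonneg_left (key t ht) (by positivity)
    _ ≤ (1 / t ^ ε) * (|w T| * t ^ ε + ε ^ 2 / (4 * (ε - 1)) * (t ^ ε / t)) :=
        mul_le_mul_of_nonneg_left (add_le_add hs1 hs2) (by positivity)
    _ = |w T| + ε ^ 2 / (4 * (ε - 1) * t) := by
        field_simp
end

section
/- Let α ∈ (0,1), let q : [0,∞) → ℝ be continuous with q(t) > 0 for all t ≥ 0 and ∫₀^{+∞} q(t) dt = +∞, and let x be a solution of the fractional differential equation (x^(α))'(t) + q(t)x(t) = 0 for t > 0 with x(t) > 0 for all t ≥ T (for some T > 0). Then it is not the case that x^(α)(t)·[x'(t) − x^(α)(t)] ≥ 0 for all t ≥ T; i.e., there exists t ≥ T with x^(α)(t)·[x'(t) − x^(α)(t)] < 0. -/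
open Real MeasureTheory Filter

theorem eventually_positive_solution_sign_change
    (α T : ℝ) (hα : α ∈ Set.Ioo (0:ℝ) 1) (hT : 0 < T)
    (q x : ℝ → ℝ) (hq : ContinuousOn q (Set.Ici (0:ℝ)))
    (hqpos : ∀ t ≥ (0:ℝ), 0 < q t)
    (hdiv : Tendsto (fun t => ∫ s in (0:ℝ)..t, q s) atTop atTop)
    (hx : ContDiffOn ℝ 1 x (Set.Ici (0:ℝ)))
    (heq : ∀ t > (0:ℝ), HasDerivAt (caputoDeriv α x) (-(q t * x t)) t)
    (hxpos : ∀ t ≥ T, 0 < x t) :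
    ∃ t ≥ T, caputoDeriv α x t * (deriv x t - caputoDeriv α x t) < 0 := by
  by_contra hcon
  push_neg at hcon
  set D : ℝ → ℝ := caputoDeriv α x with hD
  -- x is differentiable at every t > 0
  have hdx : ∀ t > (0:ℝ), HasDerivAt x (deriv x t) t := fun t ht =>
    ((hx.contDiffAt (Ici_mem_nhds ht)).differentiableAt one_ne_zero).hasDerivAt
  -- D is continuous on Ici T
  have hDcont : ContinuousOn D (Set.Ici T) := fun t ht =>
    (heq t (lt_of_lt_of_le hT ht)).continuousAt.continuousWithinAt
  have hxcont : ContinuousOn x (Set.Ici (0:ℝ)) := hx.continuousOn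
  by_cases hpos : ∀ t ≥ T, 0 < D t
  · -- Case 1: D stays positive, so x is increasing; then D → -∞, contradiction.
    have hx'ge : ∀ t ≥ T, D t ≤ deriv x t := by
      intro t ht
      have h1 := hcon t ht
      have h2 := hpos t ht
      nlinarith
    -- x is monotone on [T, ∞)
    have hmono : StrictMonoOn x (Set.Ici T) := by
      apply strictMonoOn_of_deriv_pos (convex_Ici T)
        (hxcont.mono (Set.Ici_subset_Ici.mpr hT.le))
      intro t ht
      rw [interior_Ici] at ht
      exact lt_of_lt_of_le (hpos t ht.le) (hx'ge t ht.le)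
    have hxlb : ∀ t ≥ T, x T ≤ x t := fun t ht =>
      hmono.monotoneOn (Set.self_mem_Ici) ht ht
    -- the primitive Q of q
    set Q : ℝ → ℝ := fun t => ∫ s in (0:ℝ)..t, q s with hQdef
    have hQ : ∀ t > (0:ℝ), HasDerivAt Q (q t) t := by
      intro t ht
      have hint : IntervalIntegrable q volume 0 t := by
        apply ContinuousOn.intervalIntegrable
        apply hq.mono
        rw [Set.uIcc_of_le ht.le]
        exact fun s hs => hs.1
      have hmeas := ContinuousOn.stronglyMeasurableAtFilter (μ := volume)
        isOpen_Ioi (hq.mono (Set.Ioi_subset_Ici le_rfl)) t ht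
      have hcontat : ContinuousAt q t := hq.continuousAt (Ici_mem_nhds ht)
      exact intervalIntegral.integral_hasDerivAt_right hint hmeas hcontat
    -- E = D + x T • Q is antitone on [T,∞)
    set E : ℝ → ℝ := fun t => D t + x T * Q t with hEdef
    have hE : ∀ t > (0:ℝ), HasDerivAt E (-(q t * x t) + x T * q t) t := fun t ht =>
      (heq t ht).add ((hQ t ht).const_mul (x T))
    have hEanti : AntitoneOn E (Set.Ici T) := by
      apply antitoneOn_of_deriv_nonpos (convex_Ici T)
      · exact fun t ht => (hE t (lt_of_lt_of_le hT ht)).continuousAt.continuousWithinAt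
      · intro t ht
        rw [interior_Ici] at ht
        exact (hE t (hT.trans ht)).differentiableAt.differentiableWithinAt
      · intro t ht
        rw [interior_Ici] at ht
        rw [(hE t (hT.trans ht)).deriv]
        have h1 : x T ≤ x t := hxlb t ht.le
        have h2 : 0 < q t := hqpos t (hT.trans ht).le
        nlinarith
    -- Q t → ∞, pick t with Q t large
    have hxT : 0 < x T := hxpos T le_rfl
    obtain ⟨t, htT, hQt⟩ : ∃ t ≥ T, Q T + D T / x T < Q t := by
      have := (hdiv.eventually_gt_atTop (Q T + D T / x T)).and (eventually_ge_atTop T)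
      obtain ⟨t, h1, h2⟩ := this.exists
      exact ⟨t, h2, h1⟩
    have hEle : E t ≤ E T := hEanti Set.self_mem_Ici htT htT
    have : D t ≤ D T + x T * (Q T - Q t) := by
      simp only [hEdef] at hEle; linarith
    have hDtneg : D t < 0 := by
      have h3 : D T / x T < Q t - Q T := by linarith
      rw [div_lt_iff₀ hxT] at h3
      nlinarith
    exact absurd (hpos t htT) (not_lt.mpr hDtneg.le)
  · -- Case 2: D becomes nonpositive; since D is strictly decreasing, x' ≤ D t₂ < 0.
    push_neg at hpos
    obtain ⟨t₁, ht₁T, ht₁⟩ := hpos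
    have hDanti : StrictAntiOn D (Set.Ici T) := by
      apply strictAntiOn_of_deriv_neg (convex_Ici T) hDcont
      intro t ht
      rw [interior_Ici] at ht
      rw [(heq t (hT.trans ht)).deriv]
      have h1 : 0 < q t := hqpos t (hT.trans ht).le
      have h2 : 0 < x t := hxpos t ht.le
      nlinarith
    set t₂ : ℝ := t₁ + 1 with ht₂def
    have ht₂T : T ≤ t₂ := by linarith
    have ht₂ : D t₂ < 0 :=
      lt_of_lt_of_le
        (hDanti (Set.mem_Ici.mpr ht₁T) (Set.mem_Ici.mpr ht₂T) (by linarith)) ht₁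
    -- for t ≥ t₂, deriv x t ≤ D t₂
    have hx'le : ∀ t ≥ t₂, deriv x t ≤ D t₂ := by
      intro t ht
      have hDt : D t ≤ D t₂ := by
        rcases eq_or_lt_of_le ht with h | h
        · rw [h]
        · exact (hDanti (Set.mem_Ici.mpr ht₂T) (Set.mem_Ici.mpr (by linarith)) h).le
      have h1 := hcon t (le_trans ht₂T ht)
      have h2 : D t < 0 := lt_of_le_of_lt hDt ht₂
      nlinarith
    -- y = x - D t₂ * id is antitone on [t₂, ∞)
    set y : ℝ → ℝ := fun t => x t - D t₂ * t with hydef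
    have hy : ∀ t > (0:ℝ), HasDerivAt y (deriv x t - D t₂) t := by
      intro t ht
      have := (hdx t ht).sub ((hasDerivAt_id t).const_mul (D t₂))
      rw [mul_one] at this
      exact this
    have hyanti : AntitoneOn y (Set.Ici t₂) := by
      apply antitoneOn_of_deriv_nonpos (convex_Ici t₂)
      · exact fun t ht =>
          (hy t (lt_of_lt_of_le (hT.trans_le ht₂T) ht)).continuousAt.continuousWithinAt
      · intro t ht
        rw [interior_Ici] at ht
        exact (hy t ((hT.trans_le ht₂T).trans ht)).differentiableAt.differentiableWithinAt
      · intro t ht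
        rw [interior_Ici] at ht
        rw [(hy t ((hT.trans_le ht₂T).trans ht)).deriv]
        have := hx'le t ht.le
        linarith
    -- pick t large enough that x t would be negative
    have hDpos : 0 < -(D t₂) := by linarith
    have hx₂ : 0 < x t₂ := hxpos t₂ ht₂T
    obtain ⟨A, hA, hDA⟩ : ∃ A : ℝ, 0 ≤ A ∧ D t₂ * A = -(x t₂) :=
      ⟨x t₂ / (-(D t₂)), le_of_lt (div_pos hx₂ hDpos), by field_simp; rw [div_self ht₂.ne]⟩
    have hmem : t₂ + A + 1 ∈ Set.Ici t₂ := Set.mem_Ici.mpr (by linarith)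
    have hyle : y (t₂ + A + 1) ≤ y t₂ := hyanti Set.self_mem_Ici hmem (by linarith)
    have hxt₃ : x (t₂ + A + 1) ≤ x t₂ + D t₂ * (A + 1) := by
      simp only [hydef] at hyle; nlinarith
    have := hxpos (t₂ + A + 1) (by linarith)
    nlinarith
end

section
/- Let α ∈ (0,1), T > 0, L > 0, and let x : [0,∞) → ℝ be twice continuously differentiable with x''(t) ≤ 0 for all t ≥ T and lim_{t→+∞} x'(t) = L. Then there exists T₃ ≥ 2T such that for all t ≥ T₃: x^(α)(t) ≥ 2L > (3L/2) ≥ x'(t) ≥ L/2 > 0, and consequently x^(α)(t)·[x'(t) − x^(α)(t)] < 0 for all t ≥ T₃. -/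
open Real MeasureTheory Filter

theorem caputo_eventually_dominates_derivative
    (α T L : ℝ) (hα : α ∈ Set.Ioo (0:ℝ) 1) (hT : 0 < T) (hL : 0 < L)
    (x : ℝ → ℝ) (hx : ContDiffOn ℝ 2 x (Set.Ici (0:ℝ)))
    (hconc : ∀ t ≥ T, deriv (deriv x) t ≤ 0)
    (hlim : Tendsto (deriv x) atTop (nhds L)) :
    ∃ T₃ ≥ 2 * T, ∀ t ≥ T₃,
      (caputoDeriv α x t ≥ 2 * L ∧ 2 * L > 3 * L / 2 ∧
        3 * L / 2 ≥ deriv x t ∧ deriv x t ≥ L / 2 ∧ L / 2 > 0) ∧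
      caputoDeriv α x t * (deriv x t - caputoDeriv α x t) < 0 := by
  obtain ⟨hα0, hα1⟩ := hα
  have hΓ : 0 < Real.Gamma (1 - α) := Real.Gamma_pos_of_pos (by linarith)
  -- regularity of deriv x on (0, ∞)
  have hxo : ContDiffOn ℝ 2 x (Set.Ioi 0) := hx.mono Set.Ioi_subset_Ici_self
  have hd1 : ContDiffOn ℝ 1 (deriv x) (Set.Ioi 0) := by
    have := hxo.deriv_of_isOpen isOpen_Ioi (m := 1) (by norm_num)
    exact this
  have hdc : ContinuousOn (deriv x) (Set.Ioi 0) := hd1.continuousOn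
  have hdd : DifferentiableOn ℝ (deriv x) (Set.Ioi 0) := hd1.differentiableOn one_ne_zero
  -- deriv x is antitone on [T, ∞)
  have hanti : AntitoneOn (deriv x) (Set.Ici T) := by
    apply antitoneOn_of_deriv_nonpos (convex_Ici T)
    · exact hdc.mono fun s hs => lt_of_lt_of_le hT hs
    · rw [interior_Ici]; exact hdd.mono fun s hs => lt_trans hT hs
    · rw [interior_Ici]; intro s hs; exact hconc s (le_of_lt hs)
  -- deriv x ≥ L on [T, ∞)
  have hge : ∀ s, T ≤ s → L ≤ deriv x s := by
    intro s hs
    apply le_of_tendsto hlim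
    filter_upwards [eventually_ge_atTop s] with u hu
    exact hanti hs (le_trans hs hu) hu
  -- continuous extension of deriv x to [0, ∞)
  have hgc : ContinuousOn (derivWithin x (Set.Ici 0)) (Set.Ici 0) :=
    hx.continuousOn_derivWithin (uniqueDiffOn_Ici 0) (by norm_num)
  have hgf : ∀ s : ℝ, 0 < s → derivWithin x (Set.Ici 0) s = deriv x s := fun s hs =>
    derivWithin_of_mem_nhds (Ici_mem_nhds hs)
  -- bound for deriv x on [0, T]
  obtain ⟨M₀, hM₀⟩ := (isCompact_Icc (a := (0:ℝ)) (b := T)).exists_bound_of_continuousOn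
    (hgc.mono fun s hs => hs.1)
  set M : ℝ := max M₀ ‖deriv x 0‖ with hMdef
  have hM0 : 0 ≤ M := le_trans (norm_nonneg _) (le_max_right _ _)
  have hMb : ∀ s ∈ Set.Icc (0:ℝ) T, -M ≤ deriv x s := by
    intro s hs
    rcases eq_or_lt_of_le hs.1 with h0 | h0
    · have h1 : ‖deriv x 0‖ ≤ M := le_max_right _ _
      rw [Real.norm_eq_abs] at h1
      rw [← h0]
      linarith [neg_abs_le (deriv x 0)]
    · have h1 := hM₀ s hs
      rw [hgf s h0, Real.norm_eq_abs] at h1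
      have h2 : M₀ ≤ M := le_max_left _ _
      linarith [neg_abs_le (deriv x s)]
  -- key quantitative lower bound for the Caputo derivative
  have key : ∀ t : ℝ, T < t →
      (1 / Real.Gamma (1 - α)) *
        (L * ((t - T) ^ (1 - α) / (1 - α)) + (-M) * (T * (t - T) ^ (-α)))
        ≤ caputoDeriv α x t := by
    intro t ht
    have h0t : (0:ℝ) < t := lt_trans hT ht
    -- basic integrability of the kernel
    have hbase : IntervalIntegrable (fun s => (t - s) ^ (-α)) volume 0 t := by
      have h1 : IntervalIntegrable (fun u : ℝ => u ^ (-α)) volume 0 t :=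
        intervalIntegral.intervalIntegrable_rpow' (by linarith)
      have h2 := (h1.comp_sub_left t).symm
      simpa using h2
    have hbase0T : IntervalIntegrable (fun s => (t - s) ^ (-α)) volume 0 T :=
      hbase.mono_set (by
        rw [Set.uIcc_of_le hT.le, Set.uIcc_of_le h0t.le]
        exact Set.Icc_subset_Icc le_rfl ht.le)
    have hbaseTt : IntervalIntegrable (fun s => (t - s) ^ (-α)) volume T t :=
      hbase.mono_set (by
        rw [Set.uIcc_of_le ht.le, Set.uIcc_of_le h0t.le]
        exact Set.Icc_subset_Icc hT.le le_rfl)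
    -- integrability of the full integrand
    obtain ⟨C, hC⟩ := (isCompact_Icc (a := (0:ℝ)) (b := t)).exists_bound_of_continuousOn
      (hgc.mono fun s hs => hs.1)
    have hfint : IntervalIntegrable (fun s => deriv x s * (t - s) ^ (-α)) volume 0 t := by
      rw [intervalIntegrable_iff_integrableOn_Ioc_of_le h0t.le]
      apply Integrable.bdd_mul
        ((intervalIntegrable_iff_integrableOn_Ioc_of_le h0t.le).1 hbase)
        ((measurable_deriv x).aestronglyMeasurable.restrict)
      refine (ae_restrict_iff' measurableSet_Ioc).2 (Filter.Eventually.of_forall ?_)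
      intro s hs
      have := hC s ⟨hs.1.le, hs.2⟩
      rwa [hgf s hs.1] at this
    have hfint0T : IntervalIntegrable (fun s => deriv x s * (t - s) ^ (-α)) volume 0 T :=
      hfint.mono_set (by
        rw [Set.uIcc_of_le hT.le, Set.uIcc_of_le h0t.le]
        exact Set.Icc_subset_Icc le_rfl ht.le)
    have hfintTt : IntervalIntegrable (fun s => deriv x s * (t - s) ^ (-α)) volume T t :=
      hfint.mono_set (by
        rw [Set.uIcc_of_le ht.le, Set.uIcc_of_le h0t.le]
        exact Set.Icc_subset_Icc hT.le le_rfl)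
    -- rewrite the Caputo integrand
    have hIeq : (∫ s in (0:ℝ)..t, deriv x s / (t - s) ^ α)
        = ∫ s in (0:ℝ)..t, deriv x s * (t - s) ^ (-α) := by
      apply intervalIntegral.integral_congr
      intro s hs
      rw [Set.uIcc_of_le h0t.le] at hs
      rcases eq_or_lt_of_le hs.2 with hst | hst
      · show deriv x s / (t - s) ^ α = deriv x s * (t - s) ^ (-α)
        rw [hst, sub_self, Real.zero_rpow (ne_of_gt hα0),
          Real.zero_rpow (neg_ne_zero.mpr (ne_of_gt hα0)), div_zero, mul_zero]
      · show deriv x s / (t - s) ^ α = deriv x s * (t - s) ^ (-α)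
        rw [Real.rpow_neg (by linarith), div_eq_mul_inv]
    -- compute ∫ T..t of the kernel
    have e1 : (∫ s in T..t, (t - s) ^ (-α)) = (t - T) ^ (1 - α) / (1 - α) := by
      have h1 : (∫ s in T..t, (t - s) ^ (-α))
          = ∫ u in (t - t)..(t - T), u ^ (-α) :=
        (intervalIntegral.integral_comp_sub_left (fun u : ℝ => u ^ (-α)) t).symm ▸ rfl
      rw [intervalIntegral.integral_comp_sub_left (fun u : ℝ => u ^ (-α)) t] at *
      rw [sub_self]
      rw [integral_rpow (Or.inl (by linarith))]
      rw [Real.zero_rpow (by linarith : -α + 1 ≠ 0)]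
      ring_nf
    -- lower bound on [T, t]
    have mono1 : L * ((t - T) ^ (1 - α) / (1 - α)) ≤
        ∫ s in T..t, deriv x s * (t - s) ^ (-α) := by
      have h1 : (∫ s in T..t, L * (t - s) ^ (-α)) = L * ((t - T) ^ (1 - α) / (1 - α)) := by
        rw [intervalIntegral.integral_const_mul, e1]
      rw [← h1]
      apply intervalIntegral.integral_mono_on ht.le (hbaseTt.const_mul L) hfintTt
      intro s hs
      exact mul_le_mul_of_nonneg_right (hge s hs.1) (Real.rpow_nonneg (by linarith [hs.2]) _)
    -- lower bound on [0, T]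
    have kbound : (∫ s in (0:ℝ)..T, (t - s) ^ (-α)) ≤ T * (t - T) ^ (-α) := by
      have h1 : (∫ s in (0:ℝ)..T, (t - T) ^ (-α)) = T * (t - T) ^ (-α) := by
        simp [mul_comm]
      rw [← h1]
      apply intervalIntegral.integral_mono_on hT.le hbase0T intervalIntegrable_const
      intro s hs
      exact Real.rpow_le_rpow_of_nonpos (by linarith) (by linarith [hs.2]) (by linarith)
    have mono2 : (-M) * (T * (t - T) ^ (-α)) ≤
        ∫ s in (0:ℝ)..T, deriv x s * (t - s) ^ (-α) := by
      have h2 : (-M) * (T * (t - T) ^ (-α)) ≤ (-M) * ∫ s in (0:ℝ)..T, (t - s) ^ (-α) := by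
        apply mul_le_mul_of_nonpos_left kbound (by linarith)
      refine le_trans h2 ?_
      have h3 : (∫ s in (0:ℝ)..T, (-M) * (t - s) ^ (-α))
          = (-M) * ∫ s in (0:ℝ)..T, (t - s) ^ (-α) :=
        intervalIntegral.integral_const_mul _ _
      rw [← h3]
      apply intervalIntegral.integral_mono_on hT.le (hbase0T.const_mul _) hfint0T
      intro s hs
      exact mul_le_mul_of_nonneg_right (hMb s hs)
        (Real.rpow_nonneg (by linarith [hs.2, ht]) _)
    -- combine
    have hsplit : (∫ s in (0:ℝ)..t, deriv x s * (t - s) ^ (-α))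
        = (∫ s in (0:ℝ)..T, deriv x s * (t - s) ^ (-α))
          + ∫ s in T..t, deriv x s * (t - s) ^ (-α) :=
      (intervalIntegral.integral_add_adjacent_intervals hfint0T hfintTt).symm
    unfold caputoDeriv
    rw [hIeq, hsplit]
    have hc : 0 ≤ 1 / Real.Gamma (1 - α) := by positivity
    apply mul_le_mul_of_nonneg_left _ hc
    linarith [mono1, mono2]
  -- the lower bound tends to +∞
  have hF : Tendsto (fun t : ℝ => (1 / Real.Gamma (1 - α)) *
      (L * ((t - T) ^ (1 - α) / (1 - α)) + (-M) * (T * (t - T) ^ (-α)))) atTop atTop := by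
    have hsub : Tendsto (fun t : ℝ => t - T) atTop atTop :=
      tendsto_atTop_add_const_right _ (-T) tendsto_id
    have h1 : Tendsto (fun t : ℝ => L * ((t - T) ^ (1 - α) / (1 - α))) atTop atTop := by
      have := ((tendsto_rpow_atTop (by linarith : (0:ℝ) < 1 - α)).comp hsub).const_mul_atTop
        (show (0:ℝ) < L / (1 - α) from div_pos hL (by linarith))
      apply this.congr
      intro t
      simp only [Function.comp]
      ring
    have h2 : Tendsto (fun t : ℝ => (-M) * (T * (t - T) ^ (-α))) atTop
        (nhds ((-M) * (T * 0))) := by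
      exact (((tendsto_rpow_neg_atTop hα0).comp hsub).const_mul T).const_mul (-M)
    have h3 : Tendsto (fun t : ℝ => L * ((t - T) ^ (1 - α) / (1 - α))
        + (-M) * (T * (t - T) ^ (-α))) atTop atTop := h1.atTop_add h2
    exact h3.const_mul_atTop (by positivity)
  -- the eventual upper bound on deriv x
  have hle : ∀ᶠ t in atTop, deriv x t ≤ 3 * L / 2 :=
    hlim (Iic_mem_nhds (by linarith))
  have hev : ∀ᶠ t in atTop,
      (caputoDeriv α x t ≥ 2 * L ∧ 2 * L > 3 * L / 2 ∧
        3 * L / 2 ≥ deriv x t ∧ deriv x t ≥ L / 2 ∧ L / 2 > 0) ∧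
      caputoDeriv α x t * (deriv x t - caputoDeriv α x t) < 0 := by
    filter_upwards [hle, hF.eventually_ge_atTop (2 * L), eventually_gt_atTop T] with t h1 h2 h3
    have hcap : 2 * L ≤ caputoDeriv α x t := le_trans h2 (key t h3)
    have hd : L ≤ deriv x t := hge t h3.le
    refine ⟨⟨hcap, by linarith, h1, by linarith, by linarith⟩, ?_⟩
    apply mul_neg_of_pos_of_neg (by linarith)
    linarith
  rw [eventually_atTop] at hev
  obtain ⟨a, ha⟩ := hev
  exact ⟨max a (2 * T), le_max_right _ _, fun t ht =>
    ha t (le_trans (le_max_left _ _) ht)⟩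
end

section
/- Let q : [0,∞) → ℝ be continuous and satisfy the Kamenev condition for some ε > 2 and t₀ > 0. Then every nontrivial solution x of the second-order linear equation x''(t) + q(t)x(t) = 0, t ≥ 0, oscillates: for every T > 0 there exist t₁, t₂ > T with x(t₁) < 0 and x(t₂) > 0. -/
open Real MeasureTheory Filter

open Set intervalIntegral

section Aux

variable (q : ℝ → ℝ) (x : ℝ → ℝ)

/-- Basic differentiability facts for a `C²` function on `[0,∞)`, on the open ray. -/
lemma kamenev_deriv_facts (hx : ContDiffOn ℝ 2 x (Set.Ici (0:ℝ))) :
    (∀ t ∈ Set.Ioi (0:ℝ), HasDerivAt x (deriv x t) t) ∧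
    (∀ t ∈ Set.Ioi (0:ℝ), HasDerivAt (deriv x) (deriv (deriv x) t) t) ∧
    ContinuousOn (deriv x) (Set.Ioi (0:ℝ)) := by
  have hxo : ContDiffOn ℝ 2 x (Set.Ioi (0:ℝ)) := hx.mono Set.Ioi_subset_Ici_self
  have hd1 : ContDiffOn ℝ 1 (deriv x) (Set.Ioi (0:ℝ)) :=
    hxo.deriv_of_isOpen isOpen_Ioi (by norm_num)
  refine ⟨?_, ?_, hd1.continuousOn⟩
  · intro t ht
    exact ((hxo.differentiableOn (by norm_num)).differentiableAt
      (isOpen_Ioi.mem_nhds ht)).hasDerivAt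
  · intro t ht
    exact ((hd1.differentiableOn (by norm_num)).differentiableAt
      (isOpen_Ioi.mem_nhds ht)).hasDerivAt

/-- Uniqueness: if a solution of `x'' + qx = 0` has a double zero at some `a > 0`,
then it vanishes identically on `[0,∞)`. -/
lemma kamenev_unique_zero (hq : ContinuousOn q (Set.Ici (0:ℝ)))
    (hx : ContDiffOn ℝ 2 x (Set.Ici (0:ℝ)))
    (heq : ∀ t ≥ (0:ℝ), deriv (deriv x) t + q t * x t = 0)
    (a : ℝ) (ha : 0 < a) (hxa : x a = 0) (hxa' : deriv x a = 0) :
    ∀ t ≥ (0:ℝ), x t = 0 := by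
  obtain ⟨hxd, hxd2, hdc⟩ := kamenev_deriv_facts x hx
  -- globally continuous modification of q
  set Q : ℝ → ℝ := fun u => q (max u 0) with hQdef
  have hQ : Continuous Q :=
    hq.comp_continuous (continuous_id.max continuous_const) (fun u => le_max_right u 0)
  have hQq : ∀ u : ℝ, 0 ≤ u → Q u = q u := by
    intro u hu; simp [hQdef, max_eq_left hu]
  -- main claim : x vanishes on (0,∞)
  have key : ∀ p > (0:ℝ), x p = 0 := by
    intro p hp
    set b : ℝ := max a p + 1 with hbdef
    have hab : a < b := lt_of_le_of_lt (le_max_left a p) (lt_add_one _)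
    have hpb : p < b := lt_of_le_of_lt (le_max_right a p) (lt_add_one _)
    have hb0 : 0 < b := lt_trans ha hab
    set a' : ℝ := min a p / 2 with ha'def
    have ha'0 : 0 < a' := by positivity
    have ha'a : a' < a := by
      have : min a p ≤ a := min_le_left a p
      have h2 : 0 < min a p := lt_min ha hp
      simp only [ha'def]; linarith
    have ha'p : a' < p := by
      have : min a p ≤ p := min_le_right a p
      have h2 : 0 < min a p := lt_min ha hp
      simp only [ha'def]; linarith
    -- Lipschitz bound
    obtain ⟨Kb, hKb⟩ := IsCompact.exists_bound_of_continuousOn (isCompact_Icc (a := (0:ℝ)) (b := b))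
      hQ.continuousOn
    set Kr : ℝ := max 1 Kb with hKrdef
    have hKr0 : 0 ≤ Kr := le_trans zero_le_one (le_max_left _ _)
    set K : NNReal := Real.toNNReal Kr with hKdef
    have hKco : (K : ℝ) = Kr := Real.coe_toNNReal _ hKr0
    set v : ℝ → ℝ × ℝ → ℝ × ℝ := fun t y => (y.2, -Q (min t b) * y.1) with hvdef
    have hcb : ∀ t : ℝ, |Q (min t b)| ≤ Kb := by
      intro t
      have h1 : Q (min t b) = Q (max (min t b) 0) := by
        simp only [hQdef]
        congr 1
        rcases le_total (min t b) 0 with h | h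
        · simp [max_eq_right h, max_eq_left h]
        · simp [max_eq_left h]
      rw [h1]
      have : max (min t b) 0 ∈ Set.Icc (0:ℝ) b := by
        constructor
        · exact le_max_right _ _
        · exact max_le (le_trans (min_le_right _ _) le_rfl) hb0.le
      simpa using hKb _ this
    have hlip : ∀ t : ℝ, LipschitzOnWith K (v t) (Set.univ : Set (ℝ × ℝ)) := by
      intro t
      rw [lipschitzOnWith_univ]
      apply LipschitzWith.of_dist_le_mul
      intro y z
      rw [Prod.dist_eq, hKco]
      have hd1 : dist (v t y).1 (v t z).1 = dist y.2 z.2 := rfl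
      have hd2 : dist (v t y).2 (v t z).2 = |Q (min t b)| * dist y.1 z.1 := by
        simp only [hvdef, Real.dist_eq]
        rw [show -Q (min t b) * y.1 - -Q (min t b) * z.1
            = -(Q (min t b) * (y.1 - z.1)) by ring, abs_neg, abs_mul]
      rw [hd1, hd2]
      have h1 : dist y.2 z.2 ≤ Kr * max (dist y.1 z.1) (dist y.2 z.2) := by
        have hm : dist y.2 z.2 ≤ max (dist y.1 z.1) (dist y.2 z.2) := le_max_right _ _
        have h1k : (1:ℝ) ≤ Kr := le_max_left 1 Kb
        nlinarith [dist_nonneg (x := y.2) (y := z.2), dist_nonneg (x := y.1) (y := z.1)]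
      have h2 : |Q (min t b)| * dist y.1 z.1 ≤ Kr * max (dist y.1 z.1) (dist y.2 z.2) := by
        have hq1 : |Q (min t b)| ≤ Kr := le_trans (hcb t) (le_max_right 1 Kb)
        have hm : dist y.1 z.1 ≤ max (dist y.1 z.1) (dist y.2 z.2) := le_max_left _ _
        nlinarith [abs_nonneg (Q (min t b)), dist_nonneg (x := y.1) (y := z.1),
          dist_nonneg (x := y.2) (y := z.2)]
      exact max_le h1 h2
    set f : ℝ → ℝ × ℝ := fun t => (x t, deriv x t) with hfdef
    have hfc : ContinuousOn f (Set.Icc a' b) := by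
      have hsub : Set.Icc a' b ⊆ Set.Ioi (0:ℝ) := fun u hu => lt_of_lt_of_le ha'0 hu.1
      exact ((hx.continuousOn.mono (hsub.trans Set.Ioi_subset_Ici_self)).prodMk
        (hdc.mono hsub))
    have hfd : ∀ t ∈ Set.Ioo a' b, HasDerivAt f (v t (f t)) t := by
      intro t ht
      have ht0 : (0:ℝ) < t := lt_trans ha'0 ht.1
      have h1 := (hxd t ht0).prodMk (hxd2 t ht0)
      have h2 : deriv (deriv x) t = -Q (min t b) * x t := by
        rw [min_eq_left ht.2.le, hQq t ht0.le]
        have := heq t ht0.le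
        linarith
      rw [hvdef]
      simpa [hfdef, h2] using h1
    have hg : EqOn f (fun _ => ((0:ℝ), (0:ℝ))) (Set.Icc a' b) := by
      apply ODE_solution_unique_of_mem_Icc (s := fun _ => (Set.univ : Set (ℝ × ℝ))) (fun t _ => hlip t)
        (Set.mem_Ioo.mpr ⟨ha'a, hab⟩) hfc hfd (fun _ _ => Set.mem_univ _)
        continuousOn_const _ (fun _ _ => Set.mem_univ _)
      · simp [hfdef, hxa, hxa']
      · intro t _
        have : v t ((0:ℝ), (0:ℝ)) = ((0:ℝ), (0:ℝ)) := by simp [hvdef]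
        rw [this]
        exact hasDerivAt_const t _
    have := hg (Set.mem_Icc.mpr ⟨ha'p.le, hpb.le⟩)
    simpa [hfdef] using congrArg Prod.fst this
  -- extend to t = 0 by continuity
  intro t ht
  rcases eq_or_lt_of_le ht with h | h
  · have hc : Filter.Tendsto x (nhdsWithin 0 (Set.Ioi (0:ℝ))) (nhds (x 0)) :=
      ((hx.continuousOn 0 Set.self_mem_Ici).mono Set.Ioi_subset_Ici_self)
    have hc0 : Filter.Tendsto x (nhdsWithin 0 (Set.Ioi (0:ℝ))) (nhds 0) := by
      apply Filter.Tendsto.congr' _ tendsto_const_nhds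
      filter_upwards [self_mem_nhdsWithin] with u hu
      exact (key u hu).symm
    rw [← h]
    exact tendsto_nhds_unique hc hc0
  · exact key t h

set_option maxHeartbeats 2000000 in
/-- Main step: a solution which is eventually nonnegative contradicts Kamenev's condition. -/
lemma kamenev_aux (ε t₀ : ℝ) (hε : 2 < ε) (ht₀ : 0 < t₀)
    (hq : ContinuousOn q (Set.Ici (0:ℝ)))
    (hK : KamenevCondition q ε t₀)
    (hx : ContDiffOn ℝ 2 x (Set.Ici (0:ℝ)))
    (heq : ∀ t ≥ (0:ℝ), deriv (deriv x) t + q t * x t = 0)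
    (hnt : ¬ ∀ t ≥ (0:ℝ), x t = 0)
    (T : ℝ) (hT : 0 < T) (hpos : ∀ t > T, 0 ≤ x t) : False := by
  obtain ⟨hxd, hxd2, hdc⟩ := kamenev_deriv_facts x hx
  have hε0 : (0:ℝ) < ε := by linarith
  -- x is strictly positive beyond T
  have hx0 : ∀ t > T, 0 < x t := by
    intro t ht
    rcases (hpos t ht).lt_or_eq with h | h
    · exact h
    · exfalso
      apply hnt
      have hmin : IsLocalMin x t := by
        filter_upwards [isOpen_Ioi.mem_nhds ht] with s hs
        rw [← h]; exact hpos s hs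
      exact kamenev_unique_zero q x hq hx heq t (hT.trans ht) h.symm hmin.deriv_eq_zero
  -- Riccati function
  set w : ℝ → ℝ := fun s => deriv x s / x s with hwdef
  have hw : ∀ s > T, HasDerivAt w (-q s - w s ^ 2) s := by
    intro s hs
    have hs0 : (0:ℝ) < s := hT.trans hs
    have hx_ne : x s ≠ 0 := (hx0 s hs).ne'
    have h3 := (hxd2 s hs0).div (hxd s hs0) hx_ne
    have hq' : deriv (deriv x) s = -(q s * x s) := by linarith [heq s hs0.le]
    rw [hq'] at h3
    have hgoal : (-(q s * x s) * x s - deriv x s * deriv x s) / x s ^ 2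
        = -q s - (deriv x s / x s) ^ 2 := by
      field_simp
    rw [hgoal] at h3
    exact h3
  -- fixed reference point
  set T₁ : ℝ := max T t₀ + 1 with hT₁def
  have hTT₁ : T < T₁ := lt_of_le_of_lt (le_max_left T t₀) (lt_add_one _)
  have ht₀T₁ : t₀ < T₁ := lt_of_le_of_lt (le_max_right T t₀) (lt_add_one _)
  have hT₁0 : 0 < T₁ := hT.trans hTT₁
  -- continuous extension of q
  set Q : ℝ → ℝ := fun u => q (max u 0) with hQdef
  have hQ : Continuous Q :=
    hq.comp_continuous (continuous_id.max continuous_const) (fun u => le_max_right u 0)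
  have hQq : ∀ u : ℝ, 0 ≤ u → Q u = q u := by
    intro u hu; simp [hQdef, max_eq_left hu]
  set C₁ : ℝ := ∫ u in t₀..T₁, |Q u| with hC₁def
  set M : ℝ := C₁ + |w T₁| + ε ^ 2 / 4 with hMdef
  -- the key estimate
  have key : ∀ t : ℝ, max T₁ 1 + 1 ≤ t →
      (1 / t ^ ε) * (∫ s in t₀..t, (t - s) ^ ε * q s) ≤ M := by
    intro t htt
    have hT₁t : T₁ < t := lt_of_lt_of_le (lt_of_le_of_lt (le_max_left T₁ 1) (lt_add_one _)) htt
    have ht1 : (1:ℝ) ≤ t := le_trans (by nlinarith [le_max_right T₁ (1:ℝ)]) htt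
    have ht0 : (0:ℝ) < t := lt_of_lt_of_le one_pos ht1
    have htpow : (0:ℝ) < t ^ ε := Real.rpow_pos_of_pos ht0 ε
    -- integrands
    set φ : ℝ → ℝ := fun u => (t - u) ^ ε * Q u with hφdef
    have hφc : Continuous φ :=
      ((Real.continuous_rpow_const hε0.le).comp (continuous_const.sub continuous_id)).mul hQ
    set ψ : ℝ → ℝ := fun u => (t - u) ^ (ε - 2) with hψdef
    have hψc : Continuous ψ :=
      (Real.continuous_rpow_const (by linarith)).comp (continuous_const.sub continuous_id)
    set H : ℝ → ℝ := fun s =>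
      (t - s) ^ ε * w s + (∫ u in T₁..s, φ u) - ε ^ 2 / 4 * ∫ u in T₁..s, ψ u with hHdef
    set D : ℝ → ℝ := fun s =>
      (-(ε * (t - s) ^ (ε - 1)) * w s + (t - s) ^ ε * (-q s - w s ^ 2) + φ s)
        - ε ^ 2 / 4 * ψ s with hDdef
    have hHd : ∀ s ∈ Set.Icc T₁ t, HasDerivAt H (D s) s := by
      intro s hs
      have hsT : T < s := lt_of_lt_of_le hTT₁ hs.1
      have hA : HasDerivAt (fun s => (t - s) ^ ε) (-(ε * (t - s) ^ (ε - 1))) s := by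
        have h1 : HasDerivAt (fun s : ℝ => t - s) (-1) s := (hasDerivAt_id s).const_sub t
        have h2 := (Real.hasDerivAt_rpow_const (x := t - s) (p := ε)
          (Or.inr (by linarith))).comp s h1
        rw [show -(ε * (t - s) ^ (ε - 1)) = ε * (t - s) ^ (ε - 1) * -1 by ring]
        exact h2
      have h3 := hA.mul (hw s hsT)
      have h4 : HasDerivAt (fun s => ∫ u in T₁..s, φ u) (φ s) s :=
        (hφc.integral_hasStrictDerivAt T₁ s).hasDerivAt
      have h5 : HasDerivAt (fun s => ε ^ 2 / 4 * ∫ u in T₁..s, ψ u) (ε ^ 2 / 4 * ψ s) s :=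
        ((hψc.integral_hasStrictDerivAt T₁ s).hasDerivAt).const_mul _
      exact ((h3.add h4).sub h5)
    have hD0 : ∀ s ∈ Set.Icc T₁ t, D s ≤ 0 := by
      intro s hs
      have hs0 : (0:ℝ) < s := hT₁0.trans_le hs.1
      have hQs : Q s = q s := hQq s hs0.le
      rcases eq_or_lt_of_le hs.2 with hst | hst
      · -- s = t : everything vanishes
        have h0 : t - s = 0 := by rw [hst]; ring
        simp only [hDdef, hφdef, hψdef, h0]
        rw [Real.zero_rpow (by linarith : ε - 1 ≠ 0), Real.zero_rpow hε0.ne',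
          Real.zero_rpow (by linarith : ε - 2 ≠ 0)]
        ring_nf
        simp
      · have hr : (0:ℝ) < t - s := by linarith
        set A : ℝ := (t - s) ^ (ε / 2) with hAdef
        set B : ℝ := (t - s) ^ (ε / 2 - 1) with hBdef
        have hA2 : A * A = (t - s) ^ ε := by
          rw [hAdef, ← Real.rpow_add hr]
          congr 1; ring
        have hB2 : B * B = (t - s) ^ (ε - 2) := by
          rw [hBdef, ← Real.rpow_add hr]
          congr 1; ring
        have hAB : A * B = (t - s) ^ (ε - 1) := by
          rw [hAdef, hBdef, ← Real.rpow_add hr]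
          congr 1; ring
        have hDeq : D s = -((A * w s + ε / 2 * B) ^ 2) := by
          simp only [hDdef, hφdef, hψdef, hQs]
          rw [← hA2, ← hAB, ← hB2]
          ring
        rw [hDeq]
        simpa using sq_nonneg (A * w s + ε / 2 * B)
    -- H is antitone on [T₁, t]
    have hHanti : AntitoneOn H (Set.Icc T₁ t) := by
      apply antitoneOn_of_deriv_nonpos (convex_Icc T₁ t)
      · exact fun s hs => (hHd s hs).continuousAt.continuousWithinAt
      · intro s hs
        rw [interior_Icc] at hs
        exact ((hHd s (Set.mem_Icc_of_Ioo hs)).differentiableAt).differentiableWithinAt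
      · intro s hs
        rw [interior_Icc] at hs
        rw [(hHd s (Set.mem_Icc_of_Ioo hs)).deriv]
        exact hD0 s (Set.mem_Icc_of_Ioo hs)
    have hHt : H t ≤ H T₁ :=
      hHanti (Set.left_mem_Icc.mpr hT₁t.le) (Set.right_mem_Icc.mpr hT₁t.le) hT₁t.le
    have hHT₁ : H T₁ = (t - T₁) ^ ε * w T₁ := by
      simp [hHdef, intervalIntegral.integral_same]
    have hHtval : H t = (∫ u in T₁..t, φ u) - ε ^ 2 / 4 * ∫ u in T₁..t, ψ u := by
      simp only [hHdef, sub_self, Real.zero_rpow hε0.ne', zero_mul, zero_add]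
    -- bound the two integrals
    have hIψ : (∫ u in T₁..t, ψ u) ≤ t ^ (ε - 1) := by
      have h1 : (∫ u in T₁..t, ψ u) ≤ ∫ _u in T₁..t, t ^ (ε - 2) := by
        apply intervalIntegral.integral_mono_on hT₁t.le
          (hψc.intervalIntegrable _ _) (intervalIntegrable_const)
        intro u hu
        exact Real.rpow_le_rpow (by linarith [hu.2]) (by linarith [hT₁0, hu.1]) (by linarith)
      have h2 : (∫ _u in T₁..t, t ^ (ε - 2)) = (t - T₁) * t ^ (ε - 2) := by
        rw [intervalIntegral.integral_const, smul_eq_mul]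
      have h3 : (t - T₁) * t ^ (ε - 2) ≤ t * t ^ (ε - 2) := by
        have := Real.rpow_nonneg ht0.le (ε - 2)
        nlinarith [hT₁0]
      have h4 : t * t ^ (ε - 2) = t ^ (ε - 1) := by
        rw [mul_comm, ← Real.rpow_add_one ht0.ne']
        congr 1; ring
      linarith
    have hwb : (t - T₁) ^ ε * w T₁ ≤ t ^ ε * |w T₁| := by
      have h1 : (0:ℝ) ≤ (t - T₁) ^ ε := Real.rpow_nonneg (by linarith) ε
      have h2 : (t - T₁) ^ ε ≤ t ^ ε :=
        Real.rpow_le_rpow (by linarith) (by linarith) hε0.le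
      have h3 : w T₁ ≤ |w T₁| := le_abs_self _
      rcases le_or_gt 0 (w T₁) with h | h
      · nlinarith
      · nlinarith [abs_nonneg (w T₁), htpow]
    have hJ : (∫ u in t₀..T₁, φ u) ≤ t ^ ε * C₁ := by
      have h1 : (∫ u in t₀..T₁, φ u) ≤ ∫ u in t₀..T₁, t ^ ε * |Q u| := by
        apply intervalIntegral.integral_mono_on ht₀T₁.le
          (hφc.intervalIntegrable _ _)
          ((continuous_const.mul hQ.abs).intervalIntegrable _ _)
        intro u hu
        have h2 : (0:ℝ) ≤ (t - u) ^ ε := Real.rpow_nonneg (by linarith [hu.2]) ε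
        have h3 : (t - u) ^ ε ≤ t ^ ε :=
          Real.rpow_le_rpow (by linarith [hu.2]) (by linarith [ht₀, hu.1]) hε0.le
        have h4 : Q u ≤ |Q u| := le_abs_self _
        have h5 : (0:ℝ) ≤ |Q u| := abs_nonneg _
        simp only [hφdef, Pi.mul_apply]
        rcases le_or_gt 0 (Q u) with h | h
        · nlinarith
        · nlinarith
      rw [intervalIntegral.integral_const_mul] at h1
      exact h1
    have hsplit : (∫ s in t₀..t, (t - s) ^ ε * q s) =
        (∫ u in t₀..T₁, φ u) + ∫ u in T₁..t, φ u := by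
      rw [intervalIntegral.integral_add_adjacent_intervals
        (hφc.intervalIntegrable _ _) (hφc.intervalIntegrable _ _)]
      apply intervalIntegral.integral_congr
      intro u hu
      rw [Set.uIcc_of_le (by linarith : t₀ ≤ t)] at hu
      simp only [hφdef]
      rw [hQq u (by linarith [hu.1])]
    -- combine
    have htotal : (∫ s in t₀..t, (t - s) ^ ε * q s) ≤
        t ^ ε * C₁ + t ^ ε * |w T₁| + ε ^ 2 / 4 * t ^ (ε - 1) := by
      have hIφ : (∫ u in T₁..t, φ u) ≤ (t - T₁) ^ ε * w T₁ + ε ^ 2 / 4 * ∫ u in T₁..t, ψ u := by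
        rw [hHtval, hHT₁] at hHt
        linarith
      have hε2 : (0:ℝ) ≤ ε ^ 2 / 4 := by positivity
      rw [hsplit]
      nlinarith [hIψ, hwb, hJ]
    have hcross : t ^ (ε - 1) * t = t ^ ε := by
      rw [← Real.rpow_add_one ht0.ne']
      congr 1; ring
    have hfrac : t ^ (ε - 1) ≤ t ^ ε := by
      nlinarith [Real.rpow_nonneg ht0.le (ε - 1)]
    have h1 : (1 / t ^ ε) * (∫ s in t₀..t, (t - s) ^ ε * q s) ≤
        (1 / t ^ ε) * (t ^ ε * C₁ + t ^ ε * |w T₁| + ε ^ 2 / 4 * t ^ (ε - 1)) :=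
      mul_le_mul_of_nonneg_left htotal (by positivity)
    have h2 : (1 / t ^ ε) * (t ^ ε * C₁ + t ^ ε * |w T₁| + ε ^ 2 / 4 * t ^ (ε - 1)) ≤ M := by
      have hle : (1 / t ^ ε) * (ε ^ 2 / 4 * t ^ (ε - 1)) ≤ ε ^ 2 / 4 := by
        rw [div_mul_eq_mul_div, one_mul, div_le_iff₀ htpow]
        nlinarith [hfrac, Real.rpow_nonneg ht0.le (ε - 1)]
      have heq2 : (1 / t ^ ε) * (t ^ ε * C₁ + t ^ ε * |w T₁| + ε ^ 2 / 4 * t ^ (ε - 1)) =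
          C₁ + |w T₁| + (1 / t ^ ε) * (ε ^ 2 / 4 * t ^ (ε - 1)) := by
        field_simp
      rw [heq2, hMdef]
      linarith
    linarith
  -- contradiction with Kamenev condition
  obtain ⟨t, hMt, htlarge⟩ :=
    ((hK M).and_eventually (eventually_ge_atTop (max T₁ 1 + 1))).exists
  exact absurd (key t htlarge) (not_le.mpr hMt)

end Aux

theorem kamenev_oscillation_second_order_linear
    (ε t₀ : ℝ) (hε : 2 < ε) (ht₀ : 0 < t₀)
    (q : ℝ → ℝ) (hq : ContinuousOn q (Set.Ici (0:ℝ)))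
    (hK : KamenevCondition q ε t₀)
    (x : ℝ → ℝ) (hx : ContDiffOn ℝ 2 x (Set.Ici (0:ℝ)))
    (heq : ∀ t ≥ (0:ℝ), deriv (deriv x) t + q t * x t = 0)
    (hnt : ¬ ∀ t ≥ (0:ℝ), x t = 0) :
    ∀ T > (0:ℝ), (∃ t₁ > T, x t₁ < 0) ∧ ∃ t₂ > T, 0 < x t₂ := by
  intro T hT
  constructor
  · by_contra h
    push_neg at h
    exact kamenev_aux q x ε t₀ hε ht₀ hq hK hx heq hnt T hT (fun t ht => h t ht)
  · by_contra h
    push_neg at h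
    -- apply the lemma to -x
    have hx' : ContDiffOn ℝ 2 (fun t => -x t) (Set.Ici (0:ℝ)) := hx.neg
    have hd : deriv (fun t => -x t) = fun t => -deriv x t := by
      funext t; exact deriv.neg
    have heq' : ∀ t ≥ (0:ℝ), deriv (deriv (fun t => -x t)) t + q t * (-x t) = 0 := by
      intro t ht
      rw [hd]
      have : deriv (fun t => -deriv x t) t = -deriv (deriv x) t := deriv.neg
      rw [this]
      have := heq t ht
      linarith
    have hnt' : ¬ ∀ t ≥ (0:ℝ), (fun t => -x t) t = 0 := by
      intro hc
      apply hnt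
      intro t ht
      have := hc t ht
      simpa using this
    exact kamenev_aux q (fun t => -x t) ε t₀ hε ht₀ hq hK hx' heq' hnt' T hT
      (fun t ht => by simpa using h t ht)
end
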